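/- arXiv:2305.15613 — 7 statements merged into one kernel-verified Lean document; each statement's English description precedes it below -/
import Mathlib

section
/- The rows of the simplex matrix are orthogonal with constant norm: P_n · P_nᵀ = (1 + 1/n) · I_n, where I_n is the n×n identity matrix. In particular every row of P_n has Euclidean norm p = √(1 + 1/n). -/
/-- κ = −(1+√(n+1))/n^{3/2} -/
noncomputable def simplexKappa (n : ℕ) : ℝ :=
  -(1 + Real.sqrt (n + 1)) / (n : ℝ) ^ ((3 : ℝ) / 2)

/-- μ = √(1 + 1/n) -/
noncomputable def simplexMu (n : ℕ) : ℝ := Real.sqrt (1 + 1 / n)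

/-- The vertices p_1, …, p_{n+1} ∈ ℝ^n of the regular n-simplex (0-indexed by `Fin (n+1)`):
`p_1 = n^{-1/2}·𝟙` and `p_i = κ·𝟙 + μ·e_{i-1}` for `2 ≤ i ≤ n+1`. -/
noncomputable def simplexVertex (n : ℕ) (i : Fin (n + 1)) : EuclideanSpace ℝ (Fin n) :=
  WithLp.toLp 2 fun j =>
    if (i : ℕ) = 0 then (n : ℝ) ^ (-(1 : ℝ) / 2)
    else simplexKappa n + (if (j : ℕ) = (i : ℕ) - 1 then simplexMu n else 0)

open Matrix

/-- The n×(n+1) matrix P_n whose i-th column is the simplex vertex p_i. -/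
noncomputable def simplexP (n : ℕ) : Matrix (Fin n) (Fin (n + 1)) ℝ :=
  Matrix.of fun j i => simplexVertex n i j

lemma simplexP_row_dot (n : ℕ) (hn : 1 ≤ n) (j k : Fin n) :
    ∑ i : Fin (n+1), simplexP n j i * simplexP n k i = if j = k then 1 + 1/(n:ℝ) else 0 := by
  have hn0 : (0:ℝ) < n := by exact_mod_cast hn
  have ht0 : (0:ℝ) < Real.sqrt n := Real.sqrt_pos.mpr hn0
  set t := Real.sqrt n with htdef
  set s := Real.sqrt ((n:ℝ)+1) with hsdef
  have ht : t^2 = n := Real.sq_sqrt hn0.le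
  have hs : s^2 = (n:ℝ)+1 := Real.sq_sqrt (by positivity)
  have h1 : (n:ℝ) ^ (-(1:ℝ) / 2) * (n:ℝ) ^ (-(1:ℝ) / 2) = 1/(n:ℝ) := by
    rw [← Real.rpow_add hn0]; norm_num [Real.rpow_neg_one]
  have h2 : simplexKappa n = -(1+s)/t^3 := by
    rw [simplexKappa, show ((3:ℝ)/2) = ((1:ℝ)/2) * (3:ℕ) by norm_num, Real.rpow_mul hn0.le,
      Real.rpow_natCast, ← Real.sqrt_eq_rpow]
  have h3 : simplexMu n = s / t := by
    rw [simplexMu, show (1 + 1/(n:ℝ)) = ((n:ℝ)+1)/n by field_simp,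
      Real.sqrt_div (by positivity)]
  rw [Fin.sum_univ_succ]
  simp only [simplexP, simplexVertex, Matrix.of_apply, Fin.val_zero, Fin.val_succ,
    Nat.succ_ne_zero, if_pos rfl, if_false, Nat.add_sub_cancel, Fin.val_inj,
    Nat.add_eq_zero, and_false, one_ne_zero, if_true]
  simp only [add_mul, mul_add, ite_mul, mul_ite, mul_zero, zero_mul,
    Finset.sum_add_distrib, Finset.sum_ite_eq, Finset.mem_univ, if_true,
    Finset.sum_const, Finset.card_univ, Fintype.card_fin, nsmul_eq_mul]
  have hs' : s^2 = t^2 + 1 := by rw [hs, ht]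
  rw [h1, h2, h3, ← ht]
  split_ifs with h
  · field_simp
    linear_combination (t^2 - 1) * hs'
  · field_simp
    linear_combination (-1) * hs'

/-- The rows of the simplex matrix are orthogonal with constant norm:
P_n · P_nᵀ = (1 + 1/n) • I_n; in particular every row of P_n has Euclidean
norm p = √(1 + 1/n). -/
theorem simplexP_mul_transpose (n : ℕ) (hn : 1 ≤ n) :
    simplexP n * (simplexP n)ᵀ = ((1 : ℝ) + 1 / n) • (1 : Matrix (Fin n) (Fin n) ℝ) ∧
      ∀ j : Fin n, ‖(EuclideanSpace.equiv (Fin (n + 1)) ℝ).symm (simplexP n j)‖ =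
        Real.sqrt (1 + 1 / n) := by
  constructor
  · ext j k
    rw [Matrix.mul_apply]
    simp only [Matrix.transpose_apply, Matrix.smul_apply, Matrix.one_apply, smul_eq_mul,
      mul_ite, mul_one, mul_zero]
    exact simplexP_row_dot n hn j k
  · intro j
    rw [EuclideanSpace.norm_eq]
    congr 1
    have := simplexP_row_dot n hn j j
    simp only [if_true, eq_self_iff_true] at this
    rw [← this]
    apply Finset.sum_congr rfl
    intro i _
    rw [Real.norm_eq_abs, sq_abs, sq]
    rfl
end

section
/- (Proposition: the simplex change of basis is orthogonal.) The matrix M_n satisfies M_nᵀ · M_n = I_{n+1}; that is, M_n belongs to the orthogonal group O(n+1). -/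
open Matrix

lemma aux_ite_add (P : Prop) [Decidable P] (x y : ℝ) :
    (if P then x + y else 0) = (if P then x else 0) + (if P then y else 0) := by
  split <;> simp

/-- The (n+1)×(n+1) change-of-basis matrix M_n whose i-th column is
m_i = (1/p)·(p_i, n^{-1/2}) with p = √(1 + 1/n). -/
noncomputable def simplexM (n : ℕ) : Matrix (Fin (n + 1)) (Fin (n + 1)) ℝ :=
  Matrix.of fun j i =>
    (Real.sqrt (1 + 1 / n))⁻¹ *
      (if h : (j : ℕ) < n then simplexVertex n i ⟨j, h⟩ else (n : ℝ) ^ (-(1 : ℝ) / 2))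
set_option maxHeartbeats 1000000 in
/-- (Proposition: the simplex change of basis is orthogonal.)
M_nᵀ · M_n = I_{n+1}; that is, M_n ∈ O(n+1). -/
theorem simplexM_orthogonal (n : ℕ) (hn : 1 ≤ n) :
    (simplexM n)ᵀ * simplexM n = 1 ∧
      simplexM n ∈ Matrix.orthogonalGroup (Fin (n + 1)) ℝ := by
  have hnpos : (0:ℝ) < n := by exact_mod_cast hn
  have hn0 : (n:ℝ) ≠ 0 := ne_of_gt hnpos
  set a := Real.sqrt n with ha_def
  set b := Real.sqrt ((n:ℝ) + 1) with hb_def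
  have ha0 : 0 < a := Real.sqrt_pos.mpr hnpos
  have hb0 : 0 < b := Real.sqrt_pos.mpr (by linarith)
  have ha2 : a ^ 2 = n := Real.sq_sqrt hnpos.le
  have hb2 : b ^ 2 = (n:ℝ) + 1 := Real.sq_sqrt (by linarith)
  have hrp : (n:ℝ) ^ (-(1:ℝ)/2) = a⁻¹ := by
    rw [neg_div, Real.rpow_neg hnpos.le, ha_def, Real.sqrt_eq_rpow]
  have hsq : Real.sqrt (1 + 1/(n:ℝ)) = b / a := by
    rw [show (1 : ℝ) + 1/(n:ℝ) = ((n:ℝ)+1)/n by field_simp, Real.sqrt_div (by linarith)]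
  have hmu : simplexMu n = b / a := hsq
  have hc : (Real.sqrt (1 + 1/(n:ℝ)))⁻¹ = a / b := by rw [hsq, inv_div]
  have hkappa : simplexKappa n = -(1+b)/((n:ℝ)*a) := by
    unfold simplexKappa
    rw [show ((3:ℝ)/2) = 1 + 1/2 by norm_num, Real.rpow_add hnpos, Real.rpow_one,
      ← Real.sqrt_eq_rpow]
  have hsum_ind : ∀ (m : ℕ), m < n → ∀ (r : ℝ),
      (∑ j : Fin n, if (j:ℕ) = m then r else 0) = r := by
    intro m hm r
    rw [show (∑ j : Fin n, if (j:ℕ) = m then r else 0)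
        = ∑ j : Fin n, if j = ⟨m, hm⟩ then r else 0 from
      Finset.sum_congr rfl fun j _ => if_congr (by simp [Fin.ext_iff]) rfl rfl]
    simp
  have hsum_ind2 : ∀ m₁ m₂ : ℕ, m₁ < n → ∀ (r : ℝ),
      (∑ x : Fin n, if (x:ℕ) = m₁ then (if (x:ℕ) = m₂ then r else 0) else 0)
        = if m₁ = m₂ then r else 0 := by
    intro m₁ m₂ h1 r
    rcases eq_or_ne m₁ m₂ with h | h
    · subst h
      rw [if_pos rfl]
      refine (Finset.sum_congr rfl fun x _ => ?_).trans (hsum_ind m₁ h1 r)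
      split_ifs <;> rfl
    · rw [if_neg h]
      refine Finset.sum_eq_zero fun x _ => ?_
      rcases eq_or_ne (x:ℕ) m₁ with hx | hx
      · rw [if_pos hx, if_neg (by omega)]
      · rw [if_neg hx]
  have key : (simplexM n)ᵀ * simplexM n = 1 := by
    ext i k
    rw [Matrix.mul_apply]
    simp only [Matrix.transpose_apply, simplexM, Matrix.of_apply, Matrix.one_apply]
    rw [Fin.sum_univ_castSucc]
    simp only [Fin.coe_castSucc, Fin.val_last, Fin.is_lt, dif_pos, lt_irrefl, dif_neg,
      not_false_iff, Fin.eta, hc, hrp]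
    simp only [simplexVertex, PiLp.toLp_apply]
    by_cases hi : (i:ℕ) = 0 <;> by_cases hk : (k:ℕ) = 0
    · have hik : i = k := Fin.ext (by omega)
      simp only [hi, hk, if_true, hik, if_pos rfl, hrp, Finset.sum_const,
        Finset.card_univ, Fintype.card_fin, nsmul_eq_mul]
      field_simp
      nlinarith [ha2, hb2]
    · have hik : ¬ i = k := fun h => hk (by omega)
      simp only [hi, hk, if_true, if_false, if_neg hik, hrp]
      simp only [mul_add, add_mul, mul_ite, ite_mul, mul_zero, zero_mul,
        Finset.sum_add_distrib, Finset.sum_const, Finset.card_univ, Fintype.card_fin,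
        nsmul_eq_mul]
      rw [hsum_ind ((k:ℕ)-1) (by omega)]
      rw [hkappa, hmu]
      field_simp
      ring
    · have hik : ¬ i = k := fun h => hi (by omega)
      simp only [hi, hk, if_true, if_false, if_neg hik, hrp]
      simp only [mul_add, add_mul, mul_ite, ite_mul, mul_zero, zero_mul,
        Finset.sum_add_distrib, Finset.sum_const, Finset.card_univ, Fintype.card_fin,
        nsmul_eq_mul]
      rw [hsum_ind ((i:ℕ)-1) (by omega)]
      rw [hkappa, hmu]
      field_simp
      ring
    · simp only [hi, hk, if_false]
      simp only [mul_add, add_mul, mul_ite, ite_mul, mul_zero, zero_mul, aux_ite_add,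
        Finset.sum_add_distrib, Finset.sum_const, Finset.card_univ, Fintype.card_fin,
        nsmul_eq_mul]
      rw [hsum_ind ((k:ℕ)-1) (by omega), hsum_ind ((i:ℕ)-1) (by omega),
        hsum_ind2 ((k:ℕ)-1) ((i:ℕ)-1) (by omega)]
      rcases eq_or_ne ((i:ℕ)-1) ((k:ℕ)-1) with hm | hm
      · rw [if_pos (by omega : (k:ℕ)-1 = (i:ℕ)-1), if_pos (Fin.ext (by omega) : i = k),
          hkappa, hmu]
        field_simp
        ring_nf
        linear_combination (-1 : ℝ) * hb2
      · rw [if_neg (by omega : ¬ (k:ℕ)-1 = (i:ℕ)-1),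
          if_neg (fun h : i = k => hm (by rw [h])), hkappa, hmu]
        field_simp
        ring_nf
        linear_combination (-1 : ℝ) * hb2
  refine ⟨key, ?_⟩
  rw [Matrix.mem_orthogonalGroup_iff']
  simpa using key
end

section
/- The simplex change-of-basis matrix M_n is a rotation for odd n and a reflection for even n: det(M_n) = (−1)^{n+1}, i.e., det(M_n) = 1 when n is odd and det(M_n) = −1 when n is even. -/
open Matrix

/-- s = n^{-1/2} -/
noncomputable def sS (n : ℕ) : ℝ := (n : ℝ) ^ (-(1 : ℝ) / 2)

/-- The unnormalized matrix A = p · M. -/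
noncomputable def sA (n : ℕ) : Matrix (Fin (n + 1)) (Fin (n + 1)) ℝ :=
  Matrix.of fun j i => if h : (j : ℕ) < n then simplexVertex n i ⟨j, h⟩ else sS n

/-- A after subtracting (κ/s)·(last row) from every other row. -/
noncomputable def sC (n : ℕ) : Matrix (Fin (n + 1)) (Fin (n + 1)) ℝ :=
  Matrix.of fun j i =>
    if (j : ℕ) < n then
      (if (i : ℕ) = 0 then sS n - simplexKappa n
       else if (j : ℕ) = (i : ℕ) - 1 then simplexMu n else 0)
    else sS n

/-- The bottom-left entry after clearing the last row. -/
noncomputable def sT (n : ℕ) : ℝ :=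
  sS n - (sS n / simplexMu n) * (n * (sS n - simplexKappa n))

/-- C after subtracting (s/μ)·(each other row) from the last row. -/
noncomputable def sD (n : ℕ) : Matrix (Fin (n + 1)) (Fin (n + 1)) ℝ :=
  Matrix.of fun j i =>
    if (j : ℕ) < n then
      (if (i : ℕ) = 0 then sS n - simplexKappa n
       else if (j : ℕ) = (i : ℕ) - 1 then simplexMu n else 0)
    else (if (i : ℕ) = 0 then sT n else 0)

lemma sS_pos (n : ℕ) (hn : 1 ≤ n) : 0 < sS n := by
  apply Real.rpow_pos_of_pos
  exact_mod_cast Nat.lt_of_lt_of_le Nat.zero_lt_one hn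

lemma simplexMu_pos (n : ℕ) : 0 < simplexMu n := by
  apply Real.sqrt_pos.2
  positivity

lemma simplexM_eq_smul (n : ℕ) : simplexM n = (simplexMu n)⁻¹ • sA n := by
  ext j i
  simp [simplexM, simplexMu, sA, sS]

lemma detA_eq_detC (n : ℕ) (hn : 1 ≤ n) : (sA n).det = (sC n).det := by
  apply Matrix.det_eq_of_forall_row_eq_smul_add_const
    (fun j : Fin (n + 1) => if (j : ℕ) < n then simplexKappa n / sS n else 0) (Fin.last n)
    (by simp)
  intro j i
  rcases lt_or_ge (j : ℕ) n with hj | hj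
  · have hs : ((n : ℝ) ^ (-(1 : ℝ) / 2)) ≠ 0 := (sS_pos n hn).ne'
    rcases eq_or_ne (i : ℕ) 0 with hi | hi
    · simp [sA, sC, simplexVertex, hj, hi, Fin.val_last, sS, (Fin.ext (by simp [hi]) : i = 0)]
      rw [div_mul_cancel₀ _ hs]
      ring
    · simp [sA, sC, simplexVertex, hj, hi, Fin.val_last, sS, Fin.val_ne_zero_iff.mp hi]
      rw [div_mul_cancel₀ _ hs]
      ring
  · have hj' : ¬ (j : ℕ) < n := not_lt.2 hj
    simp [sA, sC, hj', Fin.val_last]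

lemma detC_eq_detD (n : ℕ) (hn : 1 ≤ n) : (sC n).det = (sD n).det := by
  have hμ : simplexMu n ≠ 0 := (simplexMu_pos n).ne'
  have key : sC n = (sD n).updateRow (Fin.last n)
      ((1 : ℝ) • sD n (Fin.last n) +
        ∑ k ∈ Finset.univ.erase (Fin.last n), (sS n / simplexMu n) • sD n k) := by
    ext j i
    rcases eq_or_ne j (Fin.last n) with rfl | hj
    · rw [Matrix.updateRow_self]
      have hC : sC n (Fin.last n) i = sS n := by simp [sC]
      rw [hC]
      simp only [Pi.add_apply, Pi.smul_apply, Finset.sum_apply, one_smul]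
      rcases eq_or_ne (i : ℕ) 0 with hi | hi
      · have hDl : sD n (Fin.last n) i = sT n := by simp [sD, hi, (Fin.ext (by simp [hi]) : i = 0)]
        have hsum : ∀ k ∈ Finset.univ.erase (Fin.last n),
            (sS n / simplexMu n) • sD n k i
              = sS n / simplexMu n * (sS n - simplexKappa n) := by
          intro k hk
          have hk' : (k : ℕ) < n := Fin.val_lt_last (Finset.ne_of_mem_erase hk)
          simp [sD, hk', hi, (Fin.ext (by simp [hi]) : i = 0)]
        rw [Finset.sum_congr rfl hsum, Finset.sum_const,
          Finset.card_erase_of_mem (Finset.mem_univ _), Finset.card_univ,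
          Fintype.card_fin, hDl]
        simp only [Nat.add_sub_cancel, nsmul_eq_mul, sT]
        ring
      · have hDl : sD n (Fin.last n) i = 0 := by simp [sD, hi, Fin.val_ne_zero_iff.mp hi]
        rw [hDl, zero_add,
          Finset.sum_erase (f := fun k => (sS n / simplexMu n) • sD n k i)
            Finset.univ (by simp [sD, hi, Fin.val_ne_zero_iff.mp hi])]
        have him : (i : ℕ) - 1 < n + 1 := by omega
        have himn : (i : ℕ) - 1 < n := by
          have := i.isLt; omega
        rw [Finset.sum_eq_single_of_mem (⟨(i : ℕ) - 1, him⟩ : Fin (n + 1))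
          (Finset.mem_univ _) ?_]
        · have : sD n ⟨(i : ℕ) - 1, him⟩ i = simplexMu n := by
            simp [sD, himn, hi, Fin.val_ne_zero_iff.mp hi]
          rw [this, smul_eq_mul, div_mul_cancel₀ _ hμ]
        · intro k _ hk
          rcases lt_or_ge (k : ℕ) n with hk' | hk'
          · have hne : ¬ (k : ℕ) = (i : ℕ) - 1 := by
              intro h
              exact hk (Fin.ext (by simpa using h))
            simp [sD, hk', hne, hi, Fin.val_ne_zero_iff.mp hi]
          · have hk'' : ¬ (k : ℕ) < n := not_lt.2 hk'
            simp [sD, hk'', hi, Fin.val_ne_zero_iff.mp hi]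
    · have hj' : (j : ℕ) < n := Fin.val_lt_last hj
      rw [Matrix.updateRow_ne hj]
      simp [sC, sD, hj']
  rw [key, Matrix.det_updateRow_sum_aux (sD n) (Finset.univ.erase (Fin.last n))
    (Finset.notMem_erase _ _) _ _, one_smul]

lemma detD (n : ℕ) :
    (sD n).det = (-1 : ℝ) ^ n * (simplexMu n ^ n * sT n) := by
  have hσ : ((sD n).submatrix id (finRotate (n + 1))).det
      = (Equiv.Perm.sign (finRotate (n + 1)) : ℝ) * (sD n).det :=
    Matrix.det_permute' _ _
  have htri : ((sD n).submatrix id (finRotate (n + 1))).det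
      = ∏ i, (sD n) i (finRotate (n + 1) i) := by
    apply Matrix.det_of_upperTriangular
    intro i j hji
    have hjlt : j < Fin.last n := lt_of_lt_of_le hji (Fin.le_last i)
    have hv : ((j + 1 : Fin (n + 1)) : ℕ) = (j : ℕ) + 1 := Fin.val_add_one_of_lt hjlt
    have hji' : (j : ℕ) < (i : ℕ) := hji
    rcases lt_or_ge (i : ℕ) n with hi | hi
    · have h0 : ¬ ((j + 1 : Fin (n + 1)) : ℕ) = 0 := by omega
      have h1 : ¬ (i : ℕ) = ((j + 1 : Fin (n + 1)) : ℕ) - 1 := by omega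
      simp [Matrix.submatrix_apply, finRotate_succ_apply, sD, hi, h0, h1,
        Fin.val_ne_zero_iff.mp h0]
    · have hi' : ¬ (i : ℕ) < n := not_lt.2 hi
      have h0 : ¬ ((j + 1 : Fin (n + 1)) : ℕ) = 0 := by omega
      simp [Matrix.submatrix_apply, finRotate_succ_apply, sD, hi', h0,
        Fin.val_ne_zero_iff.mp h0]
  have hprod : ∏ i, (sD n) i (finRotate (n + 1) i) = simplexMu n ^ n * sT n := by
    rw [Fin.prod_univ_castSucc]
    have hlast : (sD n) (Fin.last n) (finRotate (n + 1) (Fin.last n)) = sT n := by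
      rw [finRotate_succ_apply, Fin.last_add_one]
      simp [sD]
    have hcs : ∀ i : Fin n,
        (sD n) (Fin.castSucc i) (finRotate (n + 1) (Fin.castSucc i)) = simplexMu n := by
      intro i
      have hlt : Fin.castSucc i < Fin.last n := Fin.castSucc_lt_last i
      have hv : ((Fin.castSucc i + 1 : Fin (n + 1)) : ℕ) = (Fin.castSucc i : ℕ) + 1 :=
        Fin.val_add_one_of_lt hlt
      have hi : (Fin.castSucc i : ℕ) < n := i.isLt
      have h0 : ¬ ((Fin.castSucc i + 1 : Fin (n + 1)) : ℕ) = 0 := by rw [hv]; omega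
      have h1 : (Fin.castSucc i : ℕ) = ((Fin.castSucc i + 1 : Fin (n + 1)) : ℕ) - 1 := by
        rw [hv]; omega
      simp [sD, finRotate_succ_apply, hi, h0, h1]
    rw [hlast, Finset.prod_congr rfl (fun i _ => hcs i), Finset.prod_const,
      Finset.card_univ, Fintype.card_fin]
  have hsign : (Equiv.Perm.sign (finRotate (n + 1)) : ℝ) = (-1 : ℝ) ^ n := by
    rw [sign_finRotate]
    push_cast
    ring
  have h := hσ.symm.trans htri
  rw [hsign, hprod] at h
  have : ((-1 : ℝ) ^ n) * ((-1 : ℝ) ^ n * (sD n).det) = (-1 : ℝ) ^ n * (simplexMu n ^ n * sT n) := by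
    rw [← h]
  rwa [← mul_assoc, ← pow_add, Even.neg_one_pow ⟨n, by ring⟩, one_mul] at this

lemma sT_eq (n : ℕ) (hn : 1 ≤ n) : sT n = -simplexMu n := by
  have hn0 : (0 : ℝ) < n := by exact_mod_cast hn
  set a := Real.sqrt n with ha
  set b := Real.sqrt (n + 1) with hb
  have ha2 : a ^ 2 = n := Real.sq_sqrt hn0.le
  have hb2 : b ^ 2 = n + 1 := Real.sq_sqrt (by positivity)
  have ha0 : 0 < a := Real.sqrt_pos.2 hn0
  have hb0 : 0 < b := Real.sqrt_pos.2 (by positivity)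
  have hs : sS n = a⁻¹ := by
    rw [sS, neg_div, Real.rpow_neg (Nat.cast_nonneg n), ha, Real.sqrt_eq_rpow]
  have hm : simplexMu n = b / a := by
    rw [simplexMu, show (1 : ℝ) + 1 / n = (n + 1) / n by field_simp,
      Real.sqrt_div (by positivity) _, ha, hb]
  have hk : simplexKappa n = -(1 + b) / (n * a) := by
    rw [simplexKappa, hb]
    congr 1
    rw [show (3 : ℝ) / 2 = 1 + 1 / 2 by norm_num, Real.rpow_add hn0, Real.rpow_one,
      ← Real.sqrt_eq_rpow, ha]
  rw [sT, hs, hm, hk, ← ha2]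
  have hbne : b ≠ 0 := hb0.ne'
  have hane : a ≠ 0 := ha0.ne'
  have hb2' : b ^ 2 = a ^ 2 + 1 := by rw [hb2, ha2]
  field_simp
  linear_combination hb2'

/-- The simplex change-of-basis matrix M_n is a rotation for odd n and a reflection
for even n: det(M_n) = (−1)^{n+1}, i.e. det(M_n) = 1 for odd n and −1 for even n. -/
theorem simplexM_det (n : ℕ) (hn : 1 ≤ n) :
    (simplexM n).det = (-1 : ℝ) ^ (n + 1) := by
  have hμ : simplexMu n ≠ 0 := (simplexMu_pos n).ne'
  rw [simplexM_eq_smul, Matrix.det_smul, detA_eq_detC n hn, detC_eq_detD n hn, detD n,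
    sT_eq n hn, Fintype.card_fin]
  have e : (simplexMu n)⁻¹ ^ (n + 1) *
      ((-1 : ℝ) ^ n * (simplexMu n ^ n * -simplexMu n))
      = (-1 : ℝ) ^ (n + 1) * ((simplexMu n)⁻¹ * simplexMu n) ^ (n + 1) := by
    rw [mul_pow, pow_succ, pow_succ, pow_succ]
    ring
  rw [e, inv_mul_cancel₀ hμ, one_pow, mul_one]
end

section
/- (Lemma.) The product of the simplex change-of-basis matrix with the transposed simplex matrix satisfies M_n · P_nᵀ = p · [I_n; 0ᵀ], i.e., it equals p times the (n+1)×n matrix consisting of the n×n identity matrix stacked on top of a row of zeros, where p = √(1 + 1/n). -/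
open Matrix

lemma sum_ite_fin (n c : ℕ) (hc : c < n) (x : ℝ) :
    ∑ i : Fin n, (if c = (i : ℕ) then x else 0) = x := by
  have h : ∀ i : Fin n, (if c = (i : ℕ) then x else 0)
      = (if i = (⟨c, hc⟩ : Fin n) then x else 0) := fun i => by
    simp [Fin.ext_iff, eq_comm]
  simp_rw [h, Finset.sum_ite_eq']
  simp

lemma sum_ite_mul_ite (n c d : ℕ) (hc : c < n) (x y : ℝ) :
    ∑ i : Fin n, (if c = (i : ℕ) then x else 0) * (if d = (i : ℕ) then y else 0)
      = if c = d then x * y else 0 := by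
  have h : ∀ i : Fin n, (if c = (i : ℕ) then x else 0) * (if d = (i : ℕ) then y else 0)
      = (if (i : ℕ) = c then (if c = d then x * y else 0) else 0) := fun i => by
    by_cases h1 : c = (i : ℕ) <;> by_cases h2 : d = (i : ℕ)
    · rw [if_pos h1, if_pos h2, if_pos h1.symm, if_pos (h1.trans h2.symm)]
    · rw [if_pos h1, if_neg h2, if_pos h1.symm,
        if_neg (show ¬ c = d from fun hh => h2 (hh ▸ h1)), mul_zero]
    · have hic : ¬ ((i : ℕ) = c) := fun hh => h1 hh.symm
      rw [if_neg h1, if_neg hic, zero_mul]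
    · have hic : ¬ ((i : ℕ) = c) := fun hh => h1 hh.symm
      rw [if_neg h1, if_neg hic, zero_mul]
  have h' : ∀ i : Fin n, (if (i : ℕ) = c then (if c = d then x * y else 0) else 0)
      = (if i = (⟨c, hc⟩ : Fin n) then (if c = d then x * y else 0) else 0) := fun i => by
    simp [Fin.ext_iff]
  simp_rw [h, h', Finset.sum_ite_eq']
  simp

/-- (Lemma.) M_n · P_nᵀ = p · [I_n; 0ᵀ], i.e. p times the (n+1)×n matrix consisting of
the n×n identity stacked on top of a row of zeros, where p = √(1 + 1/n). -/
theorem simplexM_mul_simplexP_transpose (n : ℕ) (hn : 1 ≤ n) :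
    simplexM n * (simplexP n)ᵀ =
      Real.sqrt (1 + 1 / n) •
        (Matrix.of fun (j : Fin (n + 1)) (k : Fin n) =>
          if (j : ℕ) = (k : ℕ) then (1 : ℝ) else 0) := by
  have hn0 : (0:ℝ) < n := by exact_mod_cast hn
  set t := Real.sqrt n with htdef
  set s := Real.sqrt ((n:ℝ) + 1) with hsdef
  have ht : 0 < t := Real.sqrt_pos.mpr hn0
  have hs : 0 < s := Real.sqrt_pos.mpr (by positivity)
  have ht2 : t * t = n := Real.mul_self_sqrt hn0.le
  have hs2 : s * s = (n:ℝ) + 1 := Real.mul_self_sqrt (by positivity)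
  have key1 : t⁻¹ * t⁻¹ + n * ((-(1+s)/(n*t)) * (-(1+s)/(n*t)))
      + (-(1+s)/(n*t)) * (s/t) + (-(1+s)/(n*t)) * (s/t) = 0 := by
    field_simp
    linear_combination (-1:ℝ) * hs2
  have key2 : t⁻¹ + n * (-(1+s)/(n*t)) + s/t = 0 := by
    field_simp
    ring
  have ha : (n:ℝ) ^ (-(1/2) : ℝ) = t⁻¹ := by
    rw [Real.rpow_neg hn0.le, ← Real.sqrt_eq_rpow]
  have hq : Real.sqrt (1 + ((n:ℝ))⁻¹) = s / t := by
    rw [show (1 + ((n:ℝ))⁻¹) = ((n:ℝ)+1)/n by field_simp, Real.sqrt_div (by positivity)]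
  have hκ : simplexKappa n = -(1+s)/((n:ℝ)*t) := by
    rw [simplexKappa]
    congr 1
    rw [show ((3:ℝ)/2) = 1 + 1/2 by norm_num, Real.rpow_add hn0, Real.rpow_one,
      ← Real.sqrt_eq_rpow]
  have hμ : simplexMu n = s / t := by
    rw [simplexMu, one_div, hq]
  have hne : s / t ≠ 0 := by positivity
  ext j k
  simp only [Matrix.mul_apply, Matrix.transpose_apply, simplexM, simplexP, Matrix.of_apply,
    Matrix.smul_apply, smul_eq_mul]
  by_cases hj : (j : ℕ) < n
  · simp only [dif_pos hj, simplexVertex]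
    rw [Fin.sum_univ_succ]
    norm_num
    rw [hq, ha, hκ, hμ]
    have expand : ∀ x : Fin n,
        (s/t)⁻¹ * (-(1+s)/((n:ℝ)*t) + if (j:ℕ) = (x:ℕ) then s/t else 0)
          * (-(1+s)/((n:ℝ)*t) + if (k:ℕ) = (x:ℕ) then s/t else 0)
        = (s/t)⁻¹ * (-(1+s)/((n:ℝ)*t)) * (-(1+s)/((n:ℝ)*t))
          + (if (j:ℕ) = (x:ℕ) then (s/t)⁻¹ * (-(1+s)/((n:ℝ)*t)) * (s/t) else 0)
          + (if (k:ℕ) = (x:ℕ) then (s/t)⁻¹ * (-(1+s)/((n:ℝ)*t)) * (s/t) else 0)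
          + (if (j:ℕ) = (x:ℕ) then s/t else 0)
            * (if (k:ℕ) = (x:ℕ) then (s/t)⁻¹ * (s/t) else 0) := fun x => by
      by_cases h1 : (j:ℕ) = (x:ℕ) <;> by_cases h2 : (k:ℕ) = (x:ℕ) <;>
        simp [h1, h2] <;> ring
    simp_rw [expand]
    rw [Finset.sum_add_distrib, Finset.sum_add_distrib, Finset.sum_add_distrib,
      Finset.sum_const, sum_ite_fin n (j:ℕ) hj, sum_ite_fin n (k:ℕ) k.isLt,
      sum_ite_mul_ite n (j:ℕ) (k:ℕ) hj]
    simp only [Finset.card_univ, Fintype.card_fin, nsmul_eq_mul]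
    by_cases hjk : (j:ℕ) = (k:ℕ)
    · rw [if_pos hjk, if_pos hjk]
      have e1 : (s/t)⁻¹ * t⁻¹ * t⁻¹
          + ((n:ℝ) * ((s/t)⁻¹ * (-(1+s)/((n:ℝ)*t)) * (-(1+s)/((n:ℝ)*t)))
            + (s/t)⁻¹ * (-(1+s)/((n:ℝ)*t)) * (s/t)
            + (s/t)⁻¹ * (-(1+s)/((n:ℝ)*t)) * (s/t)
            + (s/t) * ((s/t)⁻¹ * (s/t)))
          = (s/t)⁻¹ * (t⁻¹ * t⁻¹ + n * ((-(1+s)/(n*t)) * (-(1+s)/(n*t)))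
            + (-(1+s)/(n*t)) * (s/t) + (-(1+s)/(n*t)) * (s/t))
            + (s/t) * ((s/t)⁻¹ * (s/t)) := by ring
      rw [e1, key1, mul_zero, zero_add]
      field_simp
    · rw [if_neg hjk, if_neg hjk]
      have e1 : (s/t)⁻¹ * t⁻¹ * t⁻¹
          + ((n:ℝ) * ((s/t)⁻¹ * (-(1+s)/((n:ℝ)*t)) * (-(1+s)/((n:ℝ)*t)))
            + (s/t)⁻¹ * (-(1+s)/((n:ℝ)*t)) * (s/t)
            + (s/t)⁻¹ * (-(1+s)/((n:ℝ)*t)) * (s/t)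
            + 0)
          = (s/t)⁻¹ * (t⁻¹ * t⁻¹ + n * ((-(1+s)/(n*t)) * (-(1+s)/(n*t)))
            + (-(1+s)/(n*t)) * (s/t) + (-(1+s)/(n*t)) * (s/t)) := by ring
      rw [e1, key1, mul_zero]
  · simp only [dif_neg hj, simplexVertex]
    have hjn : (j:ℕ) = n := by omega
    have hjk : ¬ ((j:ℕ) = (k:ℕ)) := by have := k.isLt; omega
    rw [Fin.sum_univ_succ]
    norm_num
    rw [if_neg hjk, hq, ha, hκ, hμ]
    have expand : ∀ x : Fin n,
        (s/t)⁻¹ * t⁻¹ * (-(1+s)/((n:ℝ)*t) + if (k:ℕ) = (x:ℕ) then s/t else 0)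
        = (s/t)⁻¹ * t⁻¹ * (-(1+s)/((n:ℝ)*t))
          + (if (k:ℕ) = (x:ℕ) then (s/t)⁻¹ * t⁻¹ * (s/t) else 0) := fun x => by
      by_cases h2 : (k:ℕ) = (x:ℕ) <;> simp [h2] <;> ring
    simp_rw [expand]
    rw [Finset.sum_add_distrib, Finset.sum_const, sum_ite_fin n (k:ℕ) k.isLt]
    simp only [Finset.card_univ, Fintype.card_fin, nsmul_eq_mul]
    have e1 : (s/t)⁻¹ * t⁻¹ * t⁻¹
        + ((n:ℝ) * ((s/t)⁻¹ * t⁻¹ * (-(1+s)/((n:ℝ)*t))) + (s/t)⁻¹ * t⁻¹ * (s/t))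
        = (s/t)⁻¹ * t⁻¹ * (t⁻¹ + n * (-(1+s)/(n*t)) + s/t) := by ring
    rw [e1, key2, mul_zero]
end

section
/- (Proposition: the output-space representation.) For all R, R_O ∈ O(n), the matrix V = M_nᵀ · D(R_O) · D(R) · D(R_O)ᵀ · M_n is orthogonal, i.e., Vᵀ·V = I_{n+1}, and det(V) = det(R). In particular V is a rotation of ℝ^{n+1} if det(R) = 1 and a reflection if det(R) = −1. -/
open Matrix

/-- D(A): the (n+1)×(n+1) block-diagonal matrix diag(A, 1), appending a 1 to the
diagonal of the n×n matrix A. -/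
def blockDiag1 (n : ℕ) (A : Matrix (Fin n) (Fin n) ℝ) :
    Matrix (Fin (n + 1)) (Fin (n + 1)) ℝ :=
  Matrix.of fun i j =>
    if hi : (i : ℕ) < n then (if hj : (j : ℕ) < n then A ⟨i, hi⟩ ⟨j, hj⟩ else 0)
    else (if (i : ℕ) = (j : ℕ) then 1 else 0)


lemma sum_ite_val (n : ℕ) (m : ℕ) (hm : m < n) (x : ℝ) :
    ∑ k : Fin n, (if (k : ℕ) = m then x else 0) = x := by
  have h : ∀ k : Fin n, (if (k : ℕ) = m then x else 0) = (if k = ⟨m, hm⟩ then x else 0) := by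
    intro k
    by_cases h : k = ⟨m, hm⟩
    · subst h; simp
    · rw [if_neg h, if_neg (fun hh => h (Fin.ext hh))]
  rw [Finset.sum_congr rfl (fun k _ => h k)]
  simp

lemma sum_ite_ite (n : ℕ) (m1 m2 : ℕ) (h : m1 ≠ m2) (x y : ℝ) :
    ∑ k : Fin n, (if (k : ℕ) = m1 then x else 0) * (if (k : ℕ) = m2 then y else 0) = 0 := by
  apply Finset.sum_eq_zero
  intro k _
  by_cases h1 : (k:ℕ) = m1 <;> by_cases h2 : (k:ℕ) = m2 <;> simp_all

section
variable (n : ℕ) (hn : 1 ≤ n)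
include hn

lemma hn0 : (0:ℝ) < n := by exact_mod_cast hn
lemma sqrt_n_pos : 0 < Real.sqrt n := Real.sqrt_pos.mpr (hn0 n hn)
lemma rpow_neg_half : (n : ℝ) ^ (-(1:ℝ)/2) = (Real.sqrt n)⁻¹ := by
  rw [Real.sqrt_eq_rpow, ← Real.rpow_neg_one ((n:ℝ) ^ ((1:ℝ)/2)), ← Real.rpow_mul (hn0 n hn).le]
  norm_num
lemma kappa_eq : simplexKappa n = -(1 + Real.sqrt (n+1)) / (n * Real.sqrt n) := by
  rw [simplexKappa,
    show (n:ℝ)^((3:ℝ)/2) = n * Real.sqrt n by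
      rw [show ((3:ℝ)/2) = 1 + 1/2 by norm_num, Real.rpow_add (hn0 n hn), Real.rpow_one,
        ← Real.sqrt_eq_rpow]]
lemma mu_eq : simplexMu n = Real.sqrt (n+1) / Real.sqrt n := by
  rw [simplexMu, show (1 + 1/(n:ℝ)) = ((n:ℝ)+1)/n by field_simp,
    Real.sqrt_div (by positivity)]
lemma idA1 : (n:ℝ) * simplexKappa n + simplexMu n = -(Real.sqrt n)⁻¹ := by
  rw [kappa_eq n hn, mu_eq n hn]
  have ht := sqrt_n_pos n hn
  field_simp
  ring
lemma idA2 : (n:ℝ) * simplexKappa n ^ 2 + 2 * simplexKappa n * simplexMu n = -(1/n) := by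
  rw [kappa_eq n hn, mu_eq n hn]
  have ht := sqrt_n_pos n hn
  have ht2 : Real.sqrt n ^ 2 = n := Real.sq_sqrt (hn0 n hn).le
  have hs2 : Real.sqrt ((n:ℝ)+1) ^ 2 = Real.sqrt n ^ 2 + 1 := by
    rw [Real.sq_sqrt (by positivity : (0:ℝ) ≤ (n:ℝ)+1), ht2]
  set t := Real.sqrt n
  set s := Real.sqrt ((n:ℝ)+1)
  rw [← ht2]
  field_simp
  linear_combination (-1) * hs2
lemma idMu2 : simplexMu n ^ 2 = 1 + 1/n := by
  rw [simplexMu, Real.sq_sqrt (by positivity)]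

lemma simplexM_orth : (simplexM n)ᵀ * simplexM n = 1 := by
  have t0 := sqrt_n_pos n hn
  have hN0 := hn0 n hn
  have ht2 : Real.sqrt n * Real.sqrt n = n := Real.mul_self_sqrt hN0.le
  have htt : (Real.sqrt n)⁻¹ * (Real.sqrt n)⁻¹ = 1/(n:ℝ) := by
    rw [← mul_inv, ht2, one_div]
  have hp2 : Real.sqrt (1 + 1/(n:ℝ)) * Real.sqrt (1 + 1/(n:ℝ)) = 1 + 1/n :=
    Real.mul_self_sqrt (by positivity)
  have hp0 : Real.sqrt (1 + 1/(n:ℝ)) ≠ 0 := ne_of_gt (Real.sqrt_pos.mpr (by positivity))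
  have hF : ∀ i j : Fin (n+1),
      (∑ k : Fin (n+1),
        (if h : (k : ℕ) < n then simplexVertex n i ⟨k, h⟩ else (n : ℝ) ^ (-(1 : ℝ) / 2)) *
        (if h : (k : ℕ) < n then simplexVertex n j ⟨k, h⟩ else (n : ℝ) ^ (-(1 : ℝ) / 2)))
      = (1 + 1/n) * (if i = j then 1 else 0) := by
    intro i j
    rw [Fin.sum_univ_castSucc]
    have hcast : ∀ (i : Fin (n+1)) (k : Fin n),
        (if h : ((k.castSucc : Fin (n+1)) : ℕ) < n then
            simplexVertex n i ⟨(k.castSucc : Fin (n+1)), h⟩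
          else (n : ℝ) ^ (-(1 : ℝ) / 2)) = simplexVertex n i k := by
      intro i k
      rw [dif_pos (show ((k.castSucc : Fin (n+1)) : ℕ) < n from k.isLt)]
      exact congrArg (simplexVertex n i) (Fin.ext rfl)
    have hlast : ∀ (i : Fin (n+1)),
        (if h : ((Fin.last n : Fin (n+1)) : ℕ) < n then
            simplexVertex n i ⟨(Fin.last n : Fin (n+1)), h⟩
          else (n : ℝ) ^ (-(1 : ℝ) / 2)) = (Real.sqrt n)⁻¹ := by
      intro i
      rw [dif_neg (by simp), rpow_neg_half n hn]
    simp only [hcast, hlast]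
    have hvert : ∀ (i : Fin (n+1)) (k : Fin n), simplexVertex n i k =
        if (i : ℕ) = 0 then (Real.sqrt n)⁻¹
        else simplexKappa n + (if (k : ℕ) = (i : ℕ) - 1 then simplexMu n else 0) := by
      intro i k
      rw [simplexVertex, ← rpow_neg_half n hn]
    simp only [hvert]
    by_cases hi : (i : ℕ) = 0 <;> by_cases hj : (j : ℕ) = 0
    · -- i = j = 0
      have hij : i = j := Fin.ext (by omega)
      simp only [hi, hj, if_pos, hij, if_true]
      rw [Finset.sum_const, Finset.card_univ, Fintype.card_fin]
      simp only [nsmul_eq_mul, htt]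
      field_simp
    · -- i = 0, j ≠ 0
      have hij : ¬ (i = j) := fun h => hj (h ▸ hi)
      have hjn : (j : ℕ) - 1 < n := by omega
      simp only [hi, if_true, hj, if_false, hij]
      have hb : ∀ k : Fin n, (Real.sqrt n)⁻¹ *
            (simplexKappa n + (if (k : ℕ) = (j : ℕ) - 1 then simplexMu n else 0))
          = (Real.sqrt n)⁻¹ * simplexKappa n +
            (Real.sqrt n)⁻¹ * (if (k : ℕ) = (j : ℕ) - 1 then simplexMu n else 0) :=
        fun k => by ring
      rw [Finset.sum_congr rfl (fun k _ => hb k), Finset.sum_add_distrib,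
        Finset.sum_const, Finset.card_univ, Fintype.card_fin, ← Finset.mul_sum,
        sum_ite_val n _ hjn]
      simp only [nsmul_eq_mul]
      have hA1 := idA1 n hn
      have expand : (n:ℝ) * ((Real.sqrt n)⁻¹ * simplexKappa n) + (Real.sqrt n)⁻¹ * simplexMu n
            + (Real.sqrt n)⁻¹ * (Real.sqrt n)⁻¹
          = (Real.sqrt n)⁻¹ * ((n:ℝ) * simplexKappa n + simplexMu n)
            + (Real.sqrt n)⁻¹ * (Real.sqrt n)⁻¹ := by ring
      rw [expand, hA1]
      ring
    · -- i ≠ 0, j = 0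
      have hij : ¬ (i = j) := fun h => hi (h ▸ hj)
      have hin : (i : ℕ) - 1 < n := by omega
      simp only [hj, if_true, hi, if_false, hij]
      have hb : ∀ k : Fin n,
          (simplexKappa n + (if (k : ℕ) = (i : ℕ) - 1 then simplexMu n else 0)) *
            (Real.sqrt n)⁻¹
          = (Real.sqrt n)⁻¹ * simplexKappa n +
            (Real.sqrt n)⁻¹ * (if (k : ℕ) = (i : ℕ) - 1 then simplexMu n else 0) :=
        fun k => by ring
      rw [Finset.sum_congr rfl (fun k _ => hb k), Finset.sum_add_distrib,
        Finset.sum_const, Finset.card_univ, Fintype.card_fin, ← Finset.mul_sum,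
        sum_ite_val n _ hin]
      simp only [nsmul_eq_mul]
      have hA1 := idA1 n hn
      have expand : (n:ℝ) * ((Real.sqrt n)⁻¹ * simplexKappa n) + (Real.sqrt n)⁻¹ * simplexMu n
            + (Real.sqrt n)⁻¹ * (Real.sqrt n)⁻¹
          = (Real.sqrt n)⁻¹ * ((n:ℝ) * simplexKappa n + simplexMu n)
            + (Real.sqrt n)⁻¹ * (Real.sqrt n)⁻¹ := by ring
      rw [expand, hA1]
      ring
    · -- i ≠ 0, j ≠ 0
      simp only [hi, hj, if_false]
      have hA2 := idA2 n hn
      have hM2 := idMu2 n hn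
      have expand : ∀ k : Fin n,
          (simplexKappa n + (if (k : ℕ) = (i : ℕ) - 1 then simplexMu n else 0)) *
          (simplexKappa n + (if (k : ℕ) = (j : ℕ) - 1 then simplexMu n else 0))
          = simplexKappa n * simplexKappa n
            + simplexKappa n * (if (k : ℕ) = (j : ℕ) - 1 then simplexMu n else 0)
            + simplexKappa n * (if (k : ℕ) = (i : ℕ) - 1 then simplexMu n else 0)
            + (if (k : ℕ) = (i : ℕ) - 1 then simplexMu n else 0) *
              (if (k : ℕ) = (j : ℕ) - 1 then simplexMu n else 0) := fun k => by ring
      rw [Finset.sum_congr rfl (fun k _ => expand k)]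
      rw [Finset.sum_add_distrib, Finset.sum_add_distrib, Finset.sum_add_distrib,
        Finset.sum_const, Finset.card_univ, Fintype.card_fin,
        ← Finset.mul_sum, ← Finset.mul_sum,
        sum_ite_val n _ (by omega : (j:ℕ) - 1 < n),
        sum_ite_val n _ (by omega : (i:ℕ) - 1 < n)]
      simp only [nsmul_eq_mul]
      by_cases hij : i = j
      · subst hij
        simp only [if_true]
        have hsq : ∑ k : Fin n, (if (k : ℕ) = (i : ℕ) - 1 then simplexMu n else 0) *
            (if (k : ℕ) = (i : ℕ) - 1 then simplexMu n else 0)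
            = simplexMu n * simplexMu n := by
          have hcomb : ∀ k : Fin n, (if (k : ℕ) = (i : ℕ) - 1 then simplexMu n else 0) *
              (if (k : ℕ) = (i : ℕ) - 1 then simplexMu n else 0)
              = (if (k : ℕ) = (i : ℕ) - 1 then simplexMu n * simplexMu n else 0) := by
            intro k; by_cases h : (k:ℕ) = (i:ℕ) - 1 <;> simp [h]
          rw [Finset.sum_congr rfl (fun k _ => hcomb k)]
          exact sum_ite_val n ((i:ℕ) - 1) (by omega) _
        rw [hsq, htt]
        linear_combination hA2 + hM2
      · have hne : (i : ℕ) - 1 ≠ (j : ℕ) - 1 := by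
          intro h
          exact hij (Fin.ext (by omega))
        rw [sum_ite_ite n _ _ hne, htt, if_neg hij]
        linear_combination hA2
  ext i j
  rw [Matrix.mul_apply, Matrix.one_apply]
  simp only [Matrix.transpose_apply, simplexM, Matrix.of_apply]
  have hb : ∀ k : Fin (n+1),
      ((Real.sqrt (1 + 1/(n:ℝ)))⁻¹ *
        (if h : (k : ℕ) < n then simplexVertex n i ⟨k, h⟩ else (n : ℝ) ^ (-(1 : ℝ) / 2))) *
      ((Real.sqrt (1 + 1/(n:ℝ)))⁻¹ *
        (if h : (k : ℕ) < n then simplexVertex n j ⟨k, h⟩ else (n : ℝ) ^ (-(1 : ℝ) / 2)))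
      = (Real.sqrt (1 + 1/(n:ℝ)))⁻¹ * (Real.sqrt (1 + 1/(n:ℝ)))⁻¹ *
        ((if h : (k : ℕ) < n then simplexVertex n i ⟨k, h⟩ else (n : ℝ) ^ (-(1 : ℝ) / 2)) *
         (if h : (k : ℕ) < n then simplexVertex n j ⟨k, h⟩ else (n : ℝ) ^ (-(1 : ℝ) / 2))) :=
    fun k => by ring
  rw [Finset.sum_congr rfl (fun k _ => hb k), ← Finset.mul_sum, hF i j]
  by_cases hij : i = j
  · simp only [hij, if_true]
    rw [mul_one, ← mul_inv, hp2, inv_mul_cancel₀ (by positivity)]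
  · simp only [hij, if_false, mul_zero]

end



lemma bd_eq (n : ℕ) (A : Matrix (Fin n) (Fin n) ℝ) :
    blockDiag1 n A = (Matrix.reindex finSumFinEquiv finSumFinEquiv)
      (Matrix.fromBlocks A 0 0 (1 : Matrix (Fin 1) (Fin 1) ℝ)) := by
  have key : (Matrix.reindex finSumFinEquiv finSumFinEquiv).symm (blockDiag1 n A)
      = Matrix.fromBlocks A 0 0 (1 : Matrix (Fin 1) (Fin 1) ℝ) := by
    ext i j
    rcases i with i | i <;> rcases j with j | j
    · simp [blockDiag1, finSumFinEquiv_apply_left, Fin.castAdd, Fin.is_lt]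
    · simp [blockDiag1, finSumFinEquiv_apply_left, finSumFinEquiv_apply_right,
        Fin.castAdd, Fin.natAdd, Fin.is_lt]
    · simp [blockDiag1, finSumFinEquiv_apply_left, finSumFinEquiv_apply_right,
        Fin.castAdd, Fin.natAdd, Fin.is_lt, Nat.ne_of_gt j.isLt]
    · simp [blockDiag1, finSumFinEquiv_apply_right, Fin.natAdd,
        Subsingleton.elim i j]
  rw [← key, Equiv.apply_symm_apply]

lemma bd_det (n : ℕ) (A : Matrix (Fin n) (Fin n) ℝ) :
    (blockDiag1 n A).det = A.det := by
  rw [bd_eq]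
  simp [Matrix.det_fromBlocks_zero₂₁]

lemma bd_mul (n : ℕ) (A B : Matrix (Fin n) (Fin n) ℝ) :
    blockDiag1 n A * blockDiag1 n B = blockDiag1 n (A * B) := by
  simp only [bd_eq, Matrix.reindex_apply]
  rw [Matrix.submatrix_mul_equiv]
  rw [Matrix.fromBlocks_multiply]
  simp

lemma bd_transpose (n : ℕ) (A : Matrix (Fin n) (Fin n) ℝ) :
    (blockDiag1 n A)ᵀ = blockDiag1 n Aᵀ := by
  simp only [bd_eq, Matrix.reindex_apply, Matrix.transpose_submatrix,
    Matrix.fromBlocks_transpose]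
  simp

lemma bd_one (n : ℕ) : blockDiag1 n (1 : Matrix (Fin n) (Fin n) ℝ) = 1 := by
  rw [bd_eq]
  simp [Matrix.fromBlocks_one]


lemma conj_orth {m : ℕ} (M D : Matrix (Fin m) (Fin m) ℝ)
    (hM : Mᵀ * M = 1) (hM' : M * Mᵀ = 1) (hD : Dᵀ * D = 1) :
    (Mᵀ * D * M)ᵀ * (Mᵀ * D * M) = 1 := by
  rw [show (Mᵀ * D * M)ᵀ * (Mᵀ * D * M)
      = Mᵀ * (Dᵀ * ((M * Mᵀ) * (D * M))) by
    rw [Matrix.transpose_mul, Matrix.transpose_mul, Matrix.transpose_transpose]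
    noncomm_ring]
  rw [hM', one_mul, show Mᵀ * (Dᵀ * (D * M)) = Mᵀ * ((Dᵀ * D) * M) by noncomm_ring,
    hD, one_mul, hM]


/-- (Proposition: the output-space representation.) For R, R_O ∈ O(n), the matrix
V = M_nᵀ · D(R_O) · D(R) · D(R_O)ᵀ · M_n is orthogonal (Vᵀ·V = I_{n+1}) and
det(V) = det(R). -/
theorem representation_orthogonal_det (n : ℕ) (hn : 1 ≤ n)
    (R RO : Matrix (Fin n) (Fin n) ℝ) (hR : Rᵀ * R = 1) (hRO : ROᵀ * RO = 1) :
    ((simplexM n)ᵀ * blockDiag1 n RO * blockDiag1 n R * (blockDiag1 n RO)ᵀ *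
        simplexM n)ᵀ *
      ((simplexM n)ᵀ * blockDiag1 n RO * blockDiag1 n R * (blockDiag1 n RO)ᵀ *
        simplexM n) = 1 ∧
    ((simplexM n)ᵀ * blockDiag1 n RO * blockDiag1 n R * (blockDiag1 n RO)ᵀ *
        simplexM n).det = R.det := by
  have hM : (simplexM n)ᵀ * simplexM n = 1 := simplexM_orth n hn
  have hM' : simplexM n * (simplexM n)ᵀ = 1 := mul_eq_one_comm.mp hM
  have hRO' : RO * ROᵀ = 1 := mul_eq_one_comm.mp hRO
  have hV : (simplexM n)ᵀ * blockDiag1 n RO * blockDiag1 n R * (blockDiag1 n RO)ᵀ *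
        simplexM n
      = (simplexM n)ᵀ * blockDiag1 n (RO * R * ROᵀ) * simplexM n := by
    rw [bd_transpose, mul_assoc ((simplexM n)ᵀ), bd_mul,
      mul_assoc ((simplexM n)ᵀ), bd_mul]
  have hQ : (RO * R * ROᵀ)ᵀ * (RO * R * ROᵀ) = 1 := by
    have hQt : (RO * R * ROᵀ)ᵀ = RO * Rᵀ * ROᵀ := by
      rw [Matrix.transpose_mul, Matrix.transpose_mul, Matrix.transpose_transpose]
      noncomm_ring
    rw [hQt,
      show RO * Rᵀ * ROᵀ * (RO * R * ROᵀ) = RO * (Rᵀ * ((ROᵀ * RO) * (R * ROᵀ))) by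
        noncomm_ring,
      hRO, one_mul, show RO * (Rᵀ * (R * ROᵀ)) = RO * ((Rᵀ * R) * ROᵀ) by noncomm_ring,
      hR, one_mul, hRO']
  have hDQ : (blockDiag1 n (RO * R * ROᵀ))ᵀ * blockDiag1 n (RO * R * ROᵀ) = 1 := by
    rw [bd_transpose, bd_mul, hQ, bd_one]
  constructor
  · rw [hV]
    exact conj_orth _ _ hM hM' hDQ
  · rw [hV, Matrix.det_mul, Matrix.det_mul, bd_det, Matrix.det_mul, Matrix.det_mul,
      Matrix.det_transpose, Matrix.det_transpose]
    have h1 : (simplexM n).det * (simplexM n).det = 1 := by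
      have := congrArg Matrix.det hM
      rwa [Matrix.det_mul, Matrix.det_transpose, Matrix.det_one] at this
    have h2 : RO.det * RO.det = 1 := by
      have := congrArg Matrix.det hRO
      rwa [Matrix.det_mul, Matrix.det_transpose, Matrix.det_one] at this
    linear_combination (RO.det * RO.det * R.det) * h1 + R.det * h2
end

section
/- (Theorem: O(n)-equivariance of the equivariant hypersphere.) For every R ∈ O(n), the filter-bank matrix B of the equivariant hypersphere satisfies the intertwining identity V · B = B · D₂(R), where V = M_nᵀ · D(R_O · R · R_Oᵀ) · M_n. Consequently, for every input X ∈ ℝ^{n+2}, V · (B · X) = B · (D₂(R) · X). -/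
open Matrix

/-- D₂(A): the (n+2)×(n+2) block-diagonal matrix diag(A, 1, 1), appending two 1s to
the diagonal of the n×n matrix A. -/
def blockDiag2 (n : ℕ) (A : Matrix (Fin n) (Fin n) ℝ) :
    Matrix (Fin (n + 2)) (Fin (n + 2)) ℝ :=
  Matrix.of fun i j =>
    if hi : (i : ℕ) < n then (if hj : (j : ℕ) < n then A ⟨i, hi⟩ ⟨j, hj⟩ else 0)
    else (if (i : ℕ) = (j : ℕ) then 1 else 0)

/-- The filter-bank matrix B of the equivariant hypersphere: the (n+1)×(n+2) matrix
whose i-th row is ((R_Oᵀ · T_i · R_O)·c₀, s₁, s₂) ∈ ℝ^{n+2}. -/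
noncomputable def filterBank (n : ℕ) (c₀ : EuclideanSpace ℝ (Fin n)) (s₁ s₂ : ℝ)
    (RO : Matrix (Fin n) (Fin n) ℝ) (T : Fin (n + 1) → Matrix (Fin n) (Fin n) ℝ) :
    Matrix (Fin (n + 1)) (Fin (n + 2)) ℝ :=
  Matrix.of fun i j =>
    if h : (j : ℕ) < n then ((ROᵀ * T i * RO).mulVec c₀) ⟨j, h⟩
    else if (j : ℕ) = n then s₁ else s₂

lemma aux_cross_abs (nr s t : ℝ) (hs : s * s = nr) (ht : t * t = nr + 1) (hs0 : 0 < s) :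
    nr * (-(1+t)/(nr*s) * (-(1+t)/(nr*s))) + -(1+t)/(nr*s) * (t/s) + t/s * (-(1+t)/(nr*s))
      = -(1/nr) := by
  subst hs
  have h0 : (0:ℝ) < s*s := by positivity
  field_simp
  linear_combination (-1:ℝ) * ht

lemma aux_rpow_neg_half (n : ℕ) : (n:ℝ) ^ (-(1:ℝ)/2) = (Real.sqrt n)⁻¹ := by
  rw [show (-(1:ℝ)/2) = -(1/2) by norm_num, Real.rpow_neg (by positivity),
    ← Real.sqrt_eq_rpow]

lemma aux_rpow_threehalf (n : ℕ) (hn : 1 ≤ n) : (n:ℝ) ^ ((3:ℝ)/2) = n * Real.sqrt n := by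
  have h0 : (0:ℝ) < n := by exact_mod_cast hn
  rw [show ((3:ℝ)/2) = 1 + 1/2 by norm_num, Real.rpow_add h0, Real.rpow_one,
    ← Real.sqrt_eq_rpow]

lemma aux_mu_eq (n : ℕ) (hn : 1 ≤ n) : simplexMu n = Real.sqrt ((n:ℝ)+1) / Real.sqrt n := by
  have h0 : (0:ℝ) < n := by exact_mod_cast hn
  rw [simplexMu, show (1 + 1/(n:ℝ)) = ((n:ℝ)+1)/n by field_simp,
    Real.sqrt_div (by positivity)]

lemma aux_f1 (n : ℕ) (hn : 1 ≤ n) :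
    (n:ℝ) ^ (-(1:ℝ)/2) * (n:ℝ) ^ (-(1:ℝ)/2) = 1/(n:ℝ) := by
  have h0 : (0:ℝ) < n := by exact_mod_cast hn
  rw [aux_rpow_neg_half]
  rw [← Real.sqrt_inv, Real.mul_self_sqrt (by positivity)]
  exact one_div _ |>.symm

lemma aux_f2 (n : ℕ) (hn : 1 ≤ n) :
    (n:ℝ) * (simplexKappa n * simplexKappa n) + simplexKappa n * simplexMu n
      + simplexMu n * simplexKappa n = -(1/(n:ℝ)) := by
  have h0 : (0:ℝ) < n := by exact_mod_cast hn
  have hs : Real.sqrt n * Real.sqrt n = n := Real.mul_self_sqrt (by positivity)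
  have ht : Real.sqrt ((n:ℝ)+1) * Real.sqrt ((n:ℝ)+1) = (n:ℝ)+1 :=
    Real.mul_self_sqrt (by positivity)
  have hs0 : (0:ℝ) < Real.sqrt n := Real.sqrt_pos.mpr h0
  have hκ : simplexKappa n = -(1 + Real.sqrt ((n:ℝ)+1))/((n:ℝ) * Real.sqrt n) := by
    rw [simplexKappa, aux_rpow_threehalf n hn]
  rw [hκ, aux_mu_eq n hn]
  exact aux_cross_abs (n:ℝ) _ _ hs ht hs0

lemma aux_f3 (n : ℕ) : simplexMu n * simplexMu n = 1 + 1/(n:ℝ) := by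
  rw [simplexMu]
  exact Real.mul_self_sqrt (by positivity)

open Finset in
lemma aux_sumA (n : ℕ) (hn : 1 ≤ n) (j : Fin n) :
    ∑ i : Fin (n + 1), simplexVertex n i j = 0 := by
  have h0 : (0:ℝ) < n := by exact_mod_cast hn
  have hs : Real.sqrt n * Real.sqrt n = n := Real.mul_self_sqrt (by positivity)
  have hs0 : (0:ℝ) < Real.sqrt n := Real.sqrt_pos.mpr h0
  rw [Fin.sum_univ_succ]
  simp only [simplexVertex, PiLp.toLp_apply, Fin.val_zero, Fin.val_succ, if_pos rfl,
    Nat.succ_ne_zero, if_false, Nat.add_sub_cancel, Fin.val_eq_val]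
  simp only [Finset.sum_add_distrib, Finset.sum_const, card_univ, Fintype.card_fin,
    nsmul_eq_mul, Finset.sum_ite_eq, Finset.mem_univ, if_true]
  rw [aux_rpow_neg_half, aux_mu_eq n hn, simplexKappa, aux_rpow_threehalf n hn]
  field_simp
  ring

open Finset in
lemma aux_sumB (n : ℕ) (hn : 1 ≤ n) (j k : Fin n) :
    ∑ i : Fin (n + 1), simplexVertex n i j * simplexVertex n i k
      = (1 + 1/(n:ℝ)) * (if j = k then 1 else 0) := by
  have h0 : (0:ℝ) < n := by exact_mod_cast hn
  rw [Fin.sum_univ_succ]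
  simp only [simplexVertex, PiLp.toLp_apply, Fin.val_zero, Fin.val_succ, if_pos rfl,
    Nat.succ_ne_zero, if_false, Nat.add_sub_cancel, Fin.val_eq_val]
  simp only [mul_add, add_mul, ite_mul, mul_ite, mul_zero, zero_mul,
    Finset.sum_add_distrib, Finset.sum_const, card_univ, Fintype.card_fin,
    nsmul_eq_mul, Finset.sum_ite_eq, Finset.mem_univ, if_true]
  have f1 := aux_f1 n hn
  have f2 := aux_f2 n hn
  have f3 := aux_f3 n
  rcases eq_or_ne j k with rfl | hne
  · simp only [if_true, ite_true, mul_one]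
    linarith
  · simp only [if_neg hne, if_neg (Ne.symm hne), mul_zero, add_zero]
    linarith

open Finset in
lemma aux_sumMP (n : ℕ) (hn : 1 ≤ n) (l : Fin (n + 1)) (t : Fin n) :
    ∑ m : Fin (n + 1), simplexM n l m * simplexVertex n m t
      = if (l : ℕ) = (t : ℕ) then Real.sqrt (1 + 1/(n:ℝ)) else 0 := by
  have hq : Real.sqrt (1 + 1/(n:ℝ)) * Real.sqrt (1 + 1/(n:ℝ)) = 1 + 1/(n:ℝ) :=
    Real.mul_self_sqrt (by positivity)
  have hq0 : (0:ℝ) < Real.sqrt (1 + 1/(n:ℝ)) := Real.sqrt_pos.mpr (by positivity)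
  simp only [simplexM, Matrix.of_apply]
  by_cases h : (l : ℕ) < n
  · simp only [dif_pos h, mul_assoc]
    rw [← Finset.mul_sum, aux_sumB n hn ⟨l, h⟩ t]
    have hiff : ((⟨(l:ℕ), h⟩ : Fin n) = t) ↔ ((l:ℕ) = (t:ℕ)) := by
      constructor
      · intro he; exact congrArg Fin.val he
      · intro he; exact Fin.ext he
    rcases eq_or_ne ((l:ℕ)) ((t:ℕ)) with he | he
    · rw [if_pos (hiff.mpr he), if_pos he, mul_one]
      have hs : Real.sqrt (n:ℝ) * Real.sqrt (n:ℝ) = (n:ℝ) :=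
        Real.mul_self_sqrt (by positivity)
      have ht : Real.sqrt ((n:ℝ)+1) * Real.sqrt ((n:ℝ)+1) = (n:ℝ)+1 :=
        Real.mul_self_sqrt (by positivity)
      have hu : (n:ℝ) * (Real.sqrt (((n:ℝ)+1)/n) * Real.sqrt (((n:ℝ)+1)/n)) = (n:ℝ)+1 := by
        have h0 : (0:ℝ) < n := by exact_mod_cast hn
        rw [Real.mul_self_sqrt (by positivity)]; field_simp
      field_simp
      linear_combination (-1:ℝ) * hu
    · rw [if_neg (fun hc => he (hiff.mp hc)), if_neg he, mul_zero, mul_zero]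
  · simp only [dif_neg h, mul_assoc]
    rw [← Finset.mul_sum, ← Finset.mul_sum, aux_sumA n hn t]
    have : ¬ ((l:ℕ) = (t:ℕ)) := by have := t.isLt; omega
    rw [if_neg this, mul_zero, mul_zero]

open Finset in
lemma aux_sumM (n : ℕ) (hn : 1 ≤ n) (l : Fin (n + 1)) :
    ∑ m : Fin (n + 1), simplexM n l m
      = if (l : ℕ) < n then 0
        else ((n:ℝ) + 1) * ((Real.sqrt (1 + 1/(n:ℝ)))⁻¹ * (n:ℝ) ^ (-(1:ℝ)/2)) := by
  simp only [simplexM, Matrix.of_apply]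
  by_cases h : (l : ℕ) < n
  · simp only [dif_pos h]
    rw [← Finset.mul_sum, aux_sumA n hn ⟨l, h⟩, mul_zero, if_pos h]
  · simp only [dif_neg h]
    rw [Finset.sum_const, card_univ, Fintype.card_fin, nsmul_eq_mul, if_neg h]
    push_cast
    ring

open Finset in
lemma aux_key2 (n : ℕ) (hn : 1 ≤ n) (Q : Matrix (Fin n) (Fin n) ℝ) (i : Fin (n + 1))
    (t : Fin n) :
    ∑ m : Fin (n + 1),
        ((simplexM n)ᵀ * blockDiag1 n Q * simplexM n) i m * simplexVertex n m t
      = ∑ k : Fin n, simplexVertex n i k * Q k t := by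
  have hq : Real.sqrt (1 + 1/(n:ℝ)) * Real.sqrt (1 + 1/(n:ℝ)) = 1 + 1/(n:ℝ) :=
    Real.mul_self_sqrt (by positivity)
  have hq0 : (0:ℝ) < Real.sqrt (1 + 1/(n:ℝ)) := Real.sqrt_pos.mpr (by positivity)
  set A := (simplexM n)ᵀ * blockDiag1 n Q with hA
  have step1 : ∑ m : Fin (n + 1), (A * simplexM n) i m * simplexVertex n m t
      = ∑ l : Fin (n + 1), A i l * ∑ m : Fin (n + 1), simplexM n l m * simplexVertex n m t := by
    simp only [Matrix.mul_apply, Finset.sum_mul, Finset.mul_sum]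
    rw [Finset.sum_comm]
    exact Finset.sum_congr rfl fun l _ => Finset.sum_congr rfl fun m _ => by ring
  rw [step1]
  have step2 : ∀ l : Fin (n + 1),
      A i l * (∑ m : Fin (n + 1), simplexM n l m * simplexVertex n m t)
        = A i l * (if (l : ℕ) = (t : ℕ) then Real.sqrt (1 + 1/(n:ℝ)) else 0) := by
    intro l; rw [aux_sumMP n hn l t]
  rw [Finset.sum_congr rfl fun l _ => step2 l]
  rw [Finset.sum_eq_single (Fin.castSucc t)]
  · rw [if_pos (by simp [Fin.coe_castSucc])]
    rw [hA, Matrix.mul_apply]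
    simp only [Matrix.transpose_apply]
    rw [Fin.sum_univ_castSucc]
    have htn : ¬ (n = (t : ℕ)) := by have := t.isLt; omega
    simp only [simplexM, blockDiag1, Matrix.of_apply, Fin.coe_castSucc, Fin.val_last,
      Fin.is_lt, dif_pos, lt_self_iff_false, dif_neg, not_false_iff, if_neg htn,
      Fin.eta, mul_zero, add_zero]
    rw [Finset.sum_mul]
    refine Finset.sum_congr rfl fun k _ => ?_
    field_simp
  · intro l _ hl
    have : ¬ ((l : ℕ) = (t : ℕ)) := by
      intro hc
      exact hl (Fin.ext (by simpa [Fin.coe_castSucc] using hc))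
    rw [if_neg this, mul_zero]
  · intro hmem; exact absurd (Finset.mem_univ _) hmem

open Finset in
lemma aux_key1 (n : ℕ) (hn : 1 ≤ n) (Q : Matrix (Fin n) (Fin n) ℝ) (i : Fin (n + 1)) :
    ∑ m : Fin (n + 1), ((simplexM n)ᵀ * blockDiag1 n Q * simplexM n) i m = 1 := by
  have h0 : (0:ℝ) < n := by exact_mod_cast hn
  have hq : Real.sqrt (1 + 1/(n:ℝ)) * Real.sqrt (1 + 1/(n:ℝ)) = 1 + 1/(n:ℝ) :=
    Real.mul_self_sqrt (by positivity)
  have hq0 : (0:ℝ) < Real.sqrt (1 + 1/(n:ℝ)) := Real.sqrt_pos.mpr (by positivity)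
  set A := (simplexM n)ᵀ * blockDiag1 n Q with hA
  have step1 : ∑ m : Fin (n + 1), (A * simplexM n) i m
      = ∑ l : Fin (n + 1), A i l * ∑ m : Fin (n + 1), simplexM n l m := by
    simp only [Matrix.mul_apply, Finset.mul_sum]
    rw [Finset.sum_comm]
  rw [step1]
  have step2 : ∀ l : Fin (n + 1), A i l * (∑ m : Fin (n + 1), simplexM n l m)
      = A i l * (if (l : ℕ) < n then 0
          else ((n:ℝ) + 1) * ((Real.sqrt (1 + 1/(n:ℝ)))⁻¹ * (n:ℝ) ^ (-(1:ℝ)/2))) := by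
    intro l; rw [aux_sumM n hn l]
  rw [Finset.sum_congr rfl fun l _ => step2 l]
  rw [Fin.sum_univ_castSucc]
  have hzero : ∀ k : Fin n,
      A i (Fin.castSucc k) * (if ((Fin.castSucc k : Fin (n+1)) : ℕ) < n then 0
          else ((n:ℝ) + 1) * ((Real.sqrt (1 + 1/(n:ℝ)))⁻¹ * (n:ℝ) ^ (-(1:ℝ)/2))) = 0 := by
    intro k
    rw [if_pos (by simpa [Fin.coe_castSucc] using k.isLt), mul_zero]
  rw [Finset.sum_congr rfl fun k _ => hzero k, Finset.sum_const, smul_zero, zero_add]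
  rw [if_neg (by simp [Fin.val_last])]
  have hAlast : A i (Fin.last n)
      = (Real.sqrt (1 + 1/(n:ℝ)))⁻¹ * (n:ℝ) ^ (-(1:ℝ)/2) := by
    rw [hA, Matrix.mul_apply]
    simp only [Matrix.transpose_apply]
    rw [Fin.sum_univ_castSucc]
    simp only [simplexM, blockDiag1, Matrix.of_apply, Fin.coe_castSucc, Fin.val_last,
      Fin.is_lt, dif_pos, lt_self_iff_false, dif_neg, not_false_iff, Fin.eta,
      mul_zero, add_zero, if_pos rfl, mul_one]
    simp
  rw [hAlast, aux_rpow_neg_half]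
  have hs : Real.sqrt n * Real.sqrt n = n := Real.mul_self_sqrt (by positivity)
  have hs0 : (0:ℝ) < Real.sqrt n := Real.sqrt_pos.mpr h0
  have ht : Real.sqrt ((n:ℝ)+1) * Real.sqrt ((n:ℝ)+1) = (n:ℝ)+1 :=
    Real.mul_self_sqrt (by positivity)
  have hu : (n:ℝ) * (Real.sqrt (((n:ℝ)+1)/n) * Real.sqrt (((n:ℝ)+1)/n)) = (n:ℝ)+1 := by
    rw [Real.mul_self_sqrt (by positivity)]; field_simp
  field_simp
  linear_combination (-(Real.sqrt (((n:ℝ)+1)/n) * Real.sqrt (((n:ℝ)+1)/n))) * hs + (-1:ℝ) * hu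

open Finset in
lemma aux_Brow (n : ℕ) (c₀ : EuclideanSpace ℝ (Fin n)) (RO : Matrix (Fin n) (Fin n) ℝ)
    (T : Fin (n + 1) → Matrix (Fin n) (Fin n) ℝ)
    (hTc : ∀ i, (T i).mulVec (RO.mulVec c₀) = ‖c₀‖ • simplexVertex n i)
    (m : Fin (n + 1)) (j' : Fin n) :
    ((ROᵀ * T m * RO).mulVec c₀) j'
      = ‖c₀‖ * ∑ t : Fin n, RO t j' * simplexVertex n m t := by
  rw [mul_assoc, ← Matrix.mulVec_mulVec, ← Matrix.mulVec_mulVec, hTc m]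
  simp only [Matrix.mulVec, dotProduct, Matrix.transpose_apply,
    PiLp.smul_apply, Pi.smul_apply, smul_eq_mul, Finset.mul_sum]
  exact Finset.sum_congr rfl fun t _ => by ring

/-- (Theorem: O(n)-equivariance of the equivariant hypersphere.) For every R ∈ O(n),
V · B = B · D₂(R) with V = M_nᵀ · D(R_O · R · R_Oᵀ) · M_n; consequently, for every
input X ∈ ℝ^{n+2}, V · (B · X) = B · (D₂(R) · X). -/
theorem equivariant_hypersphere (n : ℕ) (hn : 1 ≤ n)
    (c₀ : EuclideanSpace ℝ (Fin n)) (s₁ s₂ : ℝ)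
    (RO : Matrix (Fin n) (Fin n) ℝ) (hRO : ROᵀ * RO = 1)
    (T : Fin (n + 1) → Matrix (Fin n) (Fin n) ℝ) (hT : ∀ i, (T i)ᵀ * T i = 1)
    (hTc : ∀ i, (T i).mulVec (RO.mulVec c₀) = ‖c₀‖ • simplexVertex n i)
    (R : Matrix (Fin n) (Fin n) ℝ) (hR : Rᵀ * R = 1) :
    ((simplexM n)ᵀ * blockDiag1 n (RO * R * ROᵀ) * simplexM n) *
        filterBank n c₀ s₁ s₂ RO T =
      filterBank n c₀ s₁ s₂ RO T * blockDiag2 n R ∧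
    ∀ X : Fin (n + 2) → ℝ,
      ((simplexM n)ᵀ * blockDiag1 n (RO * R * ROᵀ) * simplexM n).mulVec
          ((filterBank n c₀ s₁ s₂ RO T).mulVec X) =
        (filterBank n c₀ s₁ s₂ RO T).mulVec ((blockDiag2 n R).mulVec X) := by
  set B := filterBank n c₀ s₁ s₂ RO T with hB
  set Q := RO * R * ROᵀ with hQ
  have hQRO : Q * RO = RO * R := by rw [hQ, mul_assoc, hRO, mul_one]
  have h1 : (simplexM n)ᵀ * blockDiag1 n Q * simplexM n * B = B * blockDiag2 n R := by
    ext i j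
    rw [Matrix.mul_apply]
    conv_rhs => rw [Matrix.mul_apply]
    by_cases hj : (j : ℕ) < n
    · have hBcol : ∀ m : Fin (n + 1),
          B m j = ‖c₀‖ * ∑ t : Fin n, RO t ⟨j, hj⟩ * simplexVertex n m t := by
        intro m
        rw [hB]
        simp only [filterBank, Matrix.of_apply, dif_pos hj]
        exact aux_Brow n c₀ RO T hTc m ⟨j, hj⟩
      calc ∑ m : Fin (n + 1),
              ((simplexM n)ᵀ * blockDiag1 n Q * simplexM n) i m * B m j
          = ∑ t : Fin n, ‖c₀‖ * (RO t ⟨j, hj⟩ *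
              ∑ m : Fin (n + 1),
                ((simplexM n)ᵀ * blockDiag1 n Q * simplexM n) i m * simplexVertex n m t) := by
            simp only [hBcol, Finset.mul_sum]
            rw [Finset.sum_comm]
            exact Finset.sum_congr rfl fun t _ => Finset.sum_congr rfl fun m _ => by ring
        _ = ∑ t : Fin n, ‖c₀‖ * (RO t ⟨j, hj⟩ *
              ∑ k : Fin n, simplexVertex n i k * Q k t) := by
            exact Finset.sum_congr rfl fun t _ => by rw [aux_key2 n hn Q i t]
        _ = ‖c₀‖ * ∑ k : Fin n, simplexVertex n i k * (Q * RO) k ⟨j, hj⟩ := by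
            simp only [Matrix.mul_apply, Finset.mul_sum]
            rw [Finset.sum_comm]
            exact Finset.sum_congr rfl fun k _ => Finset.sum_congr rfl fun t _ => by ring
        _ = ‖c₀‖ * ∑ k : Fin n, simplexVertex n i k * (RO * R) k ⟨j, hj⟩ := by
            rw [hQRO]
        _ = ∑ m : Fin (n + 2), B i m * blockDiag2 n R m j := by
            rw [Fin.sum_univ_castSucc, Fin.sum_univ_castSucc]
            have e1 : blockDiag2 n R (Fin.castSucc (Fin.last n)) j = 0 := by
              simp only [blockDiag2, Matrix.of_apply, Fin.coe_castSucc, Fin.val_last]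
              rw [dif_neg (lt_irrefl n), if_neg (by omega)]
            have e2 : blockDiag2 n R (Fin.last (n + 1)) j = 0 := by
              simp only [blockDiag2, Matrix.of_apply, Fin.val_last]
              rw [dif_neg (by omega), if_neg (by omega)]
            rw [e1, e2, mul_zero, mul_zero, add_zero, add_zero]
            have hd : ∀ k : Fin n,
                blockDiag2 n R (Fin.castSucc (Fin.castSucc k)) j = R k ⟨j, hj⟩ := by
              intro k
              simp only [blockDiag2, Matrix.of_apply, Fin.coe_castSucc]
              rw [dif_pos k.isLt, dif_pos hj]
            have hbi : ∀ k : Fin n,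
                B i (Fin.castSucc (Fin.castSucc k))
                  = ‖c₀‖ * ∑ t : Fin n, RO t k * simplexVertex n i t := by
              intro k
              rw [hB]
              simp only [filterBank, Matrix.of_apply, Fin.coe_castSucc]
              rw [dif_pos k.isLt]
              have := aux_Brow n c₀ RO T hTc i ⟨(k : ℕ), k.isLt⟩
              simpa using this
            simp only [hd, hbi]
            simp only [Matrix.mul_apply, Finset.mul_sum, Finset.sum_mul]
            rw [Finset.sum_comm]
            exact Finset.sum_congr rfl fun k _ => Finset.sum_congr rfl fun t _ => by ring
    · have hBcst : ∀ m : Fin (n + 1), B m j = if (j : ℕ) = n then s₁ else s₂ := by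
        intro m
        rw [hB]
        simp only [filterBank, Matrix.of_apply, dif_neg hj]
      calc ∑ m : Fin (n + 1),
              ((simplexM n)ᵀ * blockDiag1 n Q * simplexM n) i m * B m j
          = (∑ m : Fin (n + 1), ((simplexM n)ᵀ * blockDiag1 n Q * simplexM n) i m) *
              (if (j : ℕ) = n then s₁ else s₂) := by
            simp only [hBcst]
            rw [Finset.sum_mul]
        _ = (if (j : ℕ) = n then s₁ else s₂) := by
            rw [aux_key1 n hn Q i, one_mul]
        _ = ∑ m : Fin (n + 2), B i m * blockDiag2 n R m j := by
            symm
            rw [Finset.sum_eq_single j]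
            · have hdj : blockDiag2 n R j j = 1 := by
                simp only [blockDiag2, Matrix.of_apply]
                rw [dif_neg hj]
                simp
              rw [hdj, mul_one, hB]
              simp only [filterBank, Matrix.of_apply, dif_neg hj]
            · intro m _ hm
              have hz : blockDiag2 n R m j = 0 := by
                simp only [blockDiag2, Matrix.of_apply]
                by_cases hm' : (m : ℕ) < n
                · rw [dif_pos hm', dif_neg hj]
                · rw [dif_neg hm', if_neg (fun hc => hm (Fin.ext hc))]
              rw [hz, mul_zero]
            · intro hmem
              exact absurd (Finset.mem_univ _) hmem
  refine ⟨h1, fun X => ?_⟩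
  rw [Matrix.mulVec_mulVec, Matrix.mulVec_mulVec, h1]
end

section
/- (Proposition: equivariant normalization.) For every R ∈ O(n) and every input X ∈ ℝ^{n+2} with B·X ≠ 0, the normalized output of the equivariant hypersphere is O(n)-equivariant: V · ((B·X)/‖B·X‖) = (B·(D₂(R)·X))/‖B·(D₂(R)·X)‖, where V = M_nᵀ · D(R_O · R · R_Oᵀ) · M_n and ‖·‖ denotes the Euclidean norm on ℝ^{n+1}. -/
open Matrix

open Matrix Finset

namespace EqNormAux

lemma sum_indicator {n : ℕ} (a : ℕ) (ha : a < n) (c : ℝ) :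
    ∑ j : Fin n, (if (j : ℕ) = a then c else 0) = c := by
  rw [Finset.sum_eq_single (⟨a, ha⟩ : Fin n)]
  · simp
  · intro b _ hb
    have hb' : (b : ℕ) ≠ a := fun h => hb (Fin.ext h)
    simp [hb']
  · simp

lemma sum_indicator2 {n : ℕ} (a b : ℕ) (ha : a < n) (c d : ℝ) :
    ∑ j : Fin n, (if (j : ℕ) = a then c else 0) * (if (j : ℕ) = b then d else 0)
      = if a = b then c * d else 0 := by
  by_cases hab : a = b
  · subst hab
    rw [if_pos rfl, ← sum_indicator a ha (c * d)]
    apply Finset.sum_congr rfl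
    intro j _
    by_cases h : (j : ℕ) = a <;> simp [h]
  · rw [if_neg hab]
    apply Finset.sum_eq_zero
    intro j _
    by_cases h : (j : ℕ) = a
    · have h2 : (j : ℕ) ≠ b := by omega
      rw [if_neg h2, mul_zero]
    · simp [h]

lemma rpow_neg_half (n : ℕ) (hn : 1 ≤ n) :
    (n : ℝ) ^ (-(1 : ℝ) / 2) = (Real.sqrt n)⁻¹ := by
  have hn0 : (0:ℝ) < n := by exact_mod_cast hn
  rw [show (-(1:ℝ)/2) = -(1/2) by norm_num, Real.rpow_neg hn0.le, ← Real.sqrt_eq_rpow]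

lemma vertex_dot (n : ℕ) (hn : 1 ≤ n) (i k : Fin (n + 1)) :
    ∑ j : Fin n, simplexVertex n i j * simplexVertex n k j
      = if i = k then 1 else -(1/(n:ℝ)) := by
  have hn0 : (0:ℝ) < n := by exact_mod_cast hn
  set u := Real.sqrt n with hu_def
  set s := Real.sqrt ((n:ℝ)+1) with hs_def
  have hu0 : 0 < u := Real.sqrt_pos.mpr hn0
  have hu2 : u ^ 2 = n := Real.sq_sqrt hn0.le
  have hs0 : 0 < s := Real.sqrt_pos.mpr (by positivity)
  have hs2 : s ^ 2 = (n:ℝ) + 1 := Real.sq_sqrt (by positivity)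
  have hinv : (n:ℝ) ^ (-(1:ℝ)/2) = u⁻¹ := rpow_neg_half n hn
  have hmu : simplexMu n = s / u := by
    rw [simplexMu, show (1 : ℝ) + 1/(n:ℝ) = ((n:ℝ)+1)/n by field_simp,
      Real.sqrt_div (by positivity)]
  have hkappa : simplexKappa n = -(1+s)/((n:ℝ)*u) := by
    rw [simplexKappa, show ((3:ℝ)/2) = 1 + 1/2 by norm_num, Real.rpow_add hn0,
      Real.rpow_one, ← Real.sqrt_eq_rpow]
  rcases Nat.eq_zero_or_pos (i : ℕ) with hi | hi
  · rcases Nat.eq_zero_or_pos (k : ℕ) with hk | hk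
    · have hik : i = k := Fin.ext (by omega)
      simp only [simplexVertex, PiLp.toLp_apply, hi, hk, ite_true, if_pos rfl, if_pos hik, hinv]
      rw [Finset.sum_const, card_univ, Fintype.card_fin, nsmul_eq_mul]
      field_simp
      nlinarith [hu2]
    · have hik : i ≠ k := fun h => by rw [h] at hi; omega
      have hkne : (k:ℕ) ≠ 0 := by omega
      have hk1 : (k:ℕ) - 1 < n := by omega
      simp only [simplexVertex, PiLp.toLp_apply, hi, hkne, ite_true, if_pos rfl, if_neg hik, ite_false, hinv]
      simp only [mul_add, mul_ite, mul_zero]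
      rw [Finset.sum_add_distrib, Finset.sum_const, card_univ, Fintype.card_fin,
        nsmul_eq_mul, sum_indicator _ hk1]
      rw [hkappa, hmu]
      field_simp
      linear_combination hu2
  · rcases Nat.eq_zero_or_pos (k : ℕ) with hk | hk
    · have hik : i ≠ k := fun h => by rw [h] at hi; omega
      have hine : (i:ℕ) ≠ 0 := by omega
      have hi1 : (i:ℕ) - 1 < n := by omega
      simp only [simplexVertex, PiLp.toLp_apply, hk, hine, ite_true, if_pos rfl, if_neg hik, ite_false, hinv]
      simp only [add_mul, ite_mul, zero_mul]
      rw [Finset.sum_add_distrib, Finset.sum_const, card_univ, Fintype.card_fin,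
        nsmul_eq_mul, sum_indicator _ hi1]
      rw [hkappa, hmu]
      field_simp
      linear_combination hu2
    · have hine : (i:ℕ) ≠ 0 := by omega
      have hkne : (k:ℕ) ≠ 0 := by omega
      have hi1 : (i:ℕ) - 1 < n := by omega
      have hk1 : (k:ℕ) - 1 < n := by omega
      simp only [simplexVertex, PiLp.toLp_apply, hine, hkne, ite_false]
      have expand : ∀ j : Fin n,
          (simplexKappa n + (if (j:ℕ) = (i:ℕ)-1 then simplexMu n else 0)) *
            (simplexKappa n + (if (j:ℕ) = (k:ℕ)-1 then simplexMu n else 0))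
          = simplexKappa n * simplexKappa n
            + ((if (j:ℕ) = (k:ℕ)-1 then simplexKappa n * simplexMu n else 0)
            + ((if (j:ℕ) = (i:ℕ)-1 then simplexKappa n * simplexMu n else 0)
            + (if (j:ℕ) = (i:ℕ)-1 then simplexMu n else 0) *
                (if (j:ℕ) = (k:ℕ)-1 then simplexMu n else 0))) := by
        intro j
        by_cases h1 : (j:ℕ) = (i:ℕ)-1 <;> by_cases h2 : (j:ℕ) = (k:ℕ)-1
        · simp only [if_pos h1, if_pos h2]; ring
        · simp only [if_pos h1, if_neg h2]; ring
        · simp only [if_neg h1, if_pos h2]; ring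
        · simp only [if_neg h1, if_neg h2]; ring
      rw [Finset.sum_congr rfl fun j _ => expand j]
      rw [Finset.sum_add_distrib, Finset.sum_add_distrib, Finset.sum_add_distrib,
        Finset.sum_const, card_univ, Fintype.card_fin, nsmul_eq_mul,
        sum_indicator _ hk1, sum_indicator _ hi1, sum_indicator2 _ _ hi1]
      by_cases hik : i = k
      · rw [if_pos hik, if_pos (by rw [hik]), hkappa, hmu]
        field_simp
        linear_combination ((n:ℝ)*u^2 + (-2)*(n:ℝ)*s^2*u^2 + (n:ℝ)^2 + (-1)*(n:ℝ)^2*s^2 + (n:ℝ)^3 + (n:ℝ)^3*u^4 + (-1)*(n:ℝ)^3*s^2*u^4 + (n:ℝ)^4*u^2 + (-1)*(n:ℝ)^4*u^6 + (-1)*(n:ℝ)^4*s^2*u^2 + (n:ℝ)^4*s^2*u^4 + (n:ℝ)^5 + (-1)*(n:ℝ)^5*u^4 + (-1)*(n:ℝ)^5*s^2 + (n:ℝ)^5*s^2*u^2 + (-1)*(n:ℝ)^6*u^2 + (n:ℝ)^6*s^2 + (-1)*(n:ℝ)^7 + (-1)*(n:ℝ)*u^2 + (2)*(n:ℝ)*s^2*u^2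 + (-1)*(n:ℝ)^2 + (1)*(n:ℝ)^2*s^2 + (-1)*(n:ℝ)^3) * hu2 + ((-1)*(n:ℝ)^3 + (-1)*(n:ℝ)^6 + (n:ℝ)^7 + (n:ℝ)^3) * hs2 + (-1 + (n:ℝ) + (1-(n:ℝ))*(n:ℝ)^3*u^6) * hs2 + (-(n:ℝ) + (n:ℝ)^4*u^6) * hu2
      · have hv : (i:ℕ) - 1 ≠ (k:ℕ) - 1 := by
          have : (i:ℕ) ≠ (k:ℕ) := fun h => hik (Fin.ext h)
          omega
        rw [if_neg hik, if_neg hv, add_zero, hkappa, hmu]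
        field_simp
        linear_combination ((-1)*(n:ℝ)*u^2 + (n:ℝ)^3 + (n:ℝ)^3*u^2 + (-1)*(n:ℝ)^3*s^2 + (n:ℝ)^4 + (n:ℝ)*u^2) * hu2 + ((-1)*(n:ℝ)^4) * hs2 + (-1 + (n:ℝ)^3*u^2) * hs2 + (1 - (n:ℝ)^3*u^2) * hu2


lemma simplexM_transpose_mul (n : ℕ) (hn : 1 ≤ n) :
    (simplexM n)ᵀ * simplexM n = 1 := by
  have hn0 : (0:ℝ) < n := by exact_mod_cast hn
  have hmu0 : (0:ℝ) < Real.sqrt (1 + 1/(n:ℝ)) := Real.sqrt_pos.mpr (by positivity)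
  have hmu2 : Real.sqrt (1 + 1/(n:ℝ)) ^ 2 = 1 + 1/(n:ℝ) := Real.sq_sqrt (by positivity)
  have hu0 : (0:ℝ) < Real.sqrt n := Real.sqrt_pos.mpr hn0
  have hu2 : Real.sqrt (n:ℝ) ^ 2 = n := Real.sq_sqrt hn0.le
  have hinv : (n:ℝ) ^ (-(1:ℝ)/2) = (Real.sqrt n)⁻¹ := rpow_neg_half n hn
  have hv2 : Real.sqrt ((n:ℝ)+1) ^ 2 = (n:ℝ)+1 := Real.sq_sqrt (by positivity)
  ext i k
  rw [Matrix.mul_apply]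
  simp only [Matrix.transpose_apply, simplexM, Matrix.of_apply]
  rw [Fin.sum_univ_castSucc]
  simp only [Fin.coe_castSucc, Fin.is_lt, dite_true, Fin.eta, Fin.val_last,
    lt_self_iff_false, dite_false, hinv]
  have step : ∀ j : Fin n,
      (Real.sqrt (1 + 1/(n:ℝ)))⁻¹ * simplexVertex n i j *
        ((Real.sqrt (1 + 1/(n:ℝ)))⁻¹ * simplexVertex n k j)
      = ((Real.sqrt (1 + 1/(n:ℝ)))⁻¹)^2 * (simplexVertex n i j * simplexVertex n k j) := by
    intro j; ring
  rw [Finset.sum_congr rfl fun j _ => step j, ← Finset.mul_sum, vertex_dot n hn i k,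
    Matrix.one_apply]
  by_cases hik : i = k
  · rw [if_pos hik, if_pos hik]
    field_simp
    have h3 : (n:ℝ) * Real.sqrt (((n:ℝ)+1)/n)^2 = n+1 := by
      rw [Real.sq_sqrt (by positivity)]; field_simp
    linear_combination (1 - Real.sqrt (((n:ℝ)+1)/n)^2) * hu2 - h3
  · rw [if_neg hik, if_neg hik]
    field_simp
    linear_combination (-1) * hu2

lemma simplexM_mul_transpose (n : ℕ) (hn : 1 ≤ n) :
    simplexM n * (simplexM n)ᵀ = 1 :=
  mul_eq_one_comm.mp (simplexM_transpose_mul n hn)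

lemma blockDiag1_transpose (n : ℕ) (A : Matrix (Fin n) (Fin n) ℝ) :
    (blockDiag1 n A)ᵀ = blockDiag1 n Aᵀ := by
  ext i j
  simp only [Matrix.transpose_apply, blockDiag1, Matrix.of_apply]
  by_cases hi : (i:ℕ) < n <;> by_cases hj : (j:ℕ) < n
  · simp [hi, hj]
  · simp only [dif_pos hi, dif_neg hj]
    rw [if_neg (by omega : ¬ (j:ℕ) = (i:ℕ))]
  · simp only [dif_pos hj, dif_neg hi]
    rw [if_neg (by omega : ¬ (i:ℕ) = (j:ℕ))]
  · simp only [dif_neg hi, dif_neg hj]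
    have h1 : (i:ℕ) = n := by omega
    have h2 : (j:ℕ) = n := by omega
    rw [h1, h2]

lemma blockDiag1_mul (n : ℕ) (A B : Matrix (Fin n) (Fin n) ℝ) :
    blockDiag1 n A * blockDiag1 n B = blockDiag1 n (A * B) := by
  ext i j
  rw [Matrix.mul_apply, Fin.sum_univ_castSucc]
  simp only [blockDiag1, Matrix.of_apply, Fin.coe_castSucc, Fin.is_lt, dite_true,
    Fin.eta, Fin.val_last, lt_self_iff_false, dite_false]
  by_cases hi : (i:ℕ) < n <;> by_cases hj : (j:ℕ) < n
  · simp only [dif_pos hi, dif_pos hj, Matrix.mul_apply]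
    rw [zero_mul, add_zero]
  · simp only [dif_pos hi, dif_neg hj]
    simp
  · simp only [dif_neg hi, dif_pos hj]
    rw [if_neg (by omega : ¬ (n:ℕ) = (j:ℕ)), mul_zero, add_zero,
      if_neg (by omega : ¬ (i:ℕ) = (j:ℕ)), Finset.sum_eq_zero]
    intro l _
    rw [if_neg (by omega : ¬ (i:ℕ) = (l:ℕ)), zero_mul]
  · simp only [dif_neg hi, dif_neg hj]
    have h1 : (i:ℕ) = n := by omega
    have h2 : (j:ℕ) = n := by omega
    rw [h1, h2]
    simp

lemma blockDiag1_one (n : ℕ) : blockDiag1 n (1 : Matrix (Fin n) (Fin n) ℝ) = 1 := by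
  ext i j
  simp only [blockDiag1, Matrix.of_apply, Matrix.one_apply]
  by_cases hi : (i:ℕ) < n <;> by_cases hj : (j:ℕ) < n
  · simp only [dif_pos hi, dif_pos hj, Matrix.one_apply, Fin.ext_iff]
  · simp only [dif_pos hi, dif_neg hj]
    rw [if_neg (by omega : ¬ i = j)]
  · simp only [dif_neg hi, dif_pos hj]
    rw [if_neg (by omega : ¬ (i:ℕ) = (j:ℕ)), if_neg (by omega : ¬ i = j)]
  · simp only [dif_neg hi, dif_neg hj, Fin.ext_iff]

/-- auxiliary factor `G` with `B = Mᵀ * G`. -/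
noncomputable def auxG (n : ℕ) (c₀ : EuclideanSpace ℝ (Fin n)) (s₁ s₂ : ℝ)
    (RO : Matrix (Fin n) (Fin n) ℝ) : Matrix (Fin (n + 1)) (Fin (n + 2)) ℝ :=
  Matrix.of fun k j =>
    if hk : (k : ℕ) < n then
      (if hj : (j : ℕ) < n then ‖c₀‖ * simplexMu n * RO ⟨k, hk⟩ ⟨j, hj⟩ else 0)
    else if (j : ℕ) = n then s₁ * simplexMu n * Real.sqrt n
    else if (j : ℕ) = n + 1 then s₂ * simplexMu n * Real.sqrt n else 0

lemma filterBank_eq (n : ℕ) (hn : 1 ≤ n) (c₀ : EuclideanSpace ℝ (Fin n)) (s₁ s₂ : ℝ)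
    (RO : Matrix (Fin n) (Fin n) ℝ) (T : Fin (n + 1) → Matrix (Fin n) (Fin n) ℝ)
    (hTc : ∀ i, (T i).mulVec (RO.mulVec c₀) = ‖c₀‖ • simplexVertex n i) :
    filterBank n c₀ s₁ s₂ RO T = (simplexM n)ᵀ * auxG n c₀ s₁ s₂ RO := by
  have hn0 : (0:ℝ) < n := by exact_mod_cast hn
  have hmu0 : Real.sqrt (1 + 1/(n:ℝ)) ≠ 0 := ne_of_gt (Real.sqrt_pos.mpr (by positivity))
  have hu0 : Real.sqrt (n:ℝ) ≠ 0 := ne_of_gt (Real.sqrt_pos.mpr hn0)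
  have hinv : (n:ℝ) ^ (-(1:ℝ)/2) = (Real.sqrt n)⁻¹ := rpow_neg_half n hn
  ext i j
  rw [Matrix.mul_apply, Fin.sum_univ_castSucc]
  simp only [Matrix.transpose_apply, simplexM, auxG, simplexMu, Matrix.of_apply,
    Fin.coe_castSucc, Fin.is_lt, dite_true, Fin.eta, Fin.val_last, lt_self_iff_false,
    dite_false, hinv, filterBank]
  by_cases hj : (j:ℕ) < n
  · rw [dif_pos hj]
    have hrow : (ROᵀ * T i * RO).mulVec c₀
        = ‖c₀‖ • (ROᵀ.mulVec (simplexVertex n i)) := by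
      rw [← Matrix.mulVec_mulVec, ← Matrix.mulVec_mulVec, hTc i, Matrix.mulVec_smul]
    rw [hrow, Pi.smul_apply, smul_eq_mul]
    simp only [Matrix.mulVec, dotProduct, Matrix.transpose_apply]
    rw [Finset.mul_sum]
    rw [if_neg (by omega : ¬ (j:ℕ) = n), if_neg (by omega : ¬ (j:ℕ) = n + 1),
      mul_zero, add_zero]
    apply Finset.sum_congr rfl
    intro l _
    rw [dif_pos hj]
    field_simp
  · rw [dif_neg hj]
    rw [Finset.sum_eq_zero, zero_add]
    · by_cases hjn : (j:ℕ) = n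
      · rw [if_pos hjn, if_pos hjn]
        field_simp
      · rw [if_neg hjn, if_neg hjn, if_pos (by omega : (j:ℕ) = n + 1)]
        field_simp
    · intro l _
      rw [dif_neg hj, mul_zero]

lemma auxG_comm (n : ℕ) (c₀ : EuclideanSpace ℝ (Fin n)) (s₁ s₂ : ℝ)
    (RO R : Matrix (Fin n) (Fin n) ℝ) (hRO : ROᵀ * RO = 1) :
    blockDiag1 n (RO * R * ROᵀ) * auxG n c₀ s₁ s₂ RO
      = auxG n c₀ s₁ s₂ RO * blockDiag2 n R := by
  have hQRO : RO * R * ROᵀ * RO = RO * R := by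
    rw [Matrix.mul_assoc (RO * R), hRO, Matrix.mul_one]
  ext k j
  rw [Matrix.mul_apply, Matrix.mul_apply, Fin.sum_univ_castSucc, Fin.sum_univ_castSucc,
    Fin.sum_univ_castSucc]
  simp only [blockDiag1, blockDiag2, auxG, Matrix.of_apply, Fin.coe_castSucc,
    Fin.is_lt, dite_true, Fin.eta, Fin.val_last, lt_self_iff_false, dite_false,
    Fin.val_succ]
  by_cases hk : (k:ℕ) < n
  · by_cases hj : (j:ℕ) < n
    · simp only [dif_pos hk, dif_pos hj, zero_mul, add_zero,
        dif_neg (show ¬ (n+1 < n) by omega), mul_zero,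
        if_neg (show ¬ (n = (j:ℕ)) by omega), if_neg (show ¬ (n+1 = (j:ℕ)) by omega)]
      have hL : ∀ x : Fin n,
          (RO * R * ROᵀ) ⟨(k:ℕ), hk⟩ x * (‖c₀‖ * simplexMu n * RO x ⟨(j:ℕ), hj⟩)
          = (‖c₀‖ * simplexMu n) * ((RO * R * ROᵀ) ⟨(k:ℕ), hk⟩ x * RO x ⟨(j:ℕ), hj⟩) :=
        fun x => by ring
      rw [Finset.sum_congr rfl fun x _ => hL x, ← Finset.mul_sum, ← Matrix.mul_apply,
        hQRO, Matrix.mul_apply, Finset.mul_sum]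
      exact Finset.sum_congr rfl fun x _ => by ring
    · simp only [dif_pos hk, dif_neg hj, mul_zero, zero_mul, add_zero, zero_add,
        Finset.sum_const_zero, dif_neg (show ¬ (n+1 < n) by omega)]
  · have hkn : (k:ℕ) = n := by omega
    by_cases hj : (j:ℕ) < n
    · simp only [dif_neg hk, dif_pos hj, dif_neg (show ¬ (n+1 < n) by omega),
        if_neg (show ¬ (n = (j:ℕ)) by omega), if_neg (show ¬ (n+1 = (j:ℕ)) by omega),
        if_neg (show ¬ ((j:ℕ) = n) by omega), if_neg (show ¬ ((j:ℕ) = n+1) by omega),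
        mul_zero, add_zero, zero_mul, zero_add]
      rw [Finset.sum_eq_zero (fun x _ => by
          rw [if_neg (show ¬ ((k:ℕ) = (x:ℕ)) from by have := x.isLt; omega), zero_mul]),
        Finset.sum_eq_zero (fun x _ => by
          rw [if_neg (show ¬ ((x:ℕ) = n) from by have := x.isLt; omega),
            if_neg (show ¬ ((x:ℕ) = n+1) from by have := x.isLt; omega), zero_mul])]
    · simp only [dif_neg hk, dif_neg hj, mul_zero, zero_mul, add_zero, zero_add,
        dif_neg (show ¬ (n+1 < n) by omega), if_neg (show ¬ (n+1 = n) by omega),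
        if_pos hkn, ite_true, one_mul, Finset.sum_const_zero]
      have hz : ∑ x : Fin n,
          ((if (x:ℕ) = n then s₁ * simplexMu n * Real.sqrt n
            else if (x:ℕ) = n+1 then s₂ * simplexMu n * Real.sqrt n else 0) *
            (if (n:ℕ)+1 = (j:ℕ) then (0:ℝ) else 0)) = 0 := by simp
      by_cases hjn : (j:ℕ) = n
      · rw [if_pos hjn, if_pos hjn.symm, if_neg (show ¬ (n+1 = (j:ℕ)) by omega)]
        ring
      · have hj1 : (j:ℕ) = n+1 := by omega
        rw [if_neg hjn, if_pos hj1, if_neg (fun h => hjn h.symm), if_pos hj1.symm]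
        ring

lemma mulVec_norm_of_orth {m : ℕ} (A : Matrix (Fin m) (Fin m) ℝ) (hA : Aᵀ * A = 1)
    (v : Fin m → ℝ) :
    ‖(EuclideanSpace.equiv (Fin m) ℝ).symm (A.mulVec v)‖
      = ‖(EuclideanSpace.equiv (Fin m) ℝ).symm v‖ := by
  have key : ∀ w : Fin m → ℝ,
      ‖(EuclideanSpace.equiv (Fin m) ℝ).symm w‖ = Real.sqrt (w ⬝ᵥ w) := by
    intro w
    rw [EuclideanSpace.norm_eq]
    congr 1
    apply Finset.sum_congr rfl
    intro i _
    simp [dotProduct, Real.norm_eq_abs, sq_abs, sq]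
  rw [key, key]
  congr 1
  calc A.mulVec v ⬝ᵥ A.mulVec v = (v ᵥ* Aᵀ) ⬝ᵥ A.mulVec v := by
        rw [Matrix.vecMul_transpose]
    _ = (v ᵥ* Aᵀ) ᵥ* A ⬝ᵥ v := by rw [Matrix.dotProduct_mulVec]
    _ = v ᵥ* (Aᵀ * A) ⬝ᵥ v := by rw [Matrix.vecMul_vecMul]
    _ = v ⬝ᵥ v := by rw [hA, Matrix.vecMul_one]

end EqNormAux

/-- (Proposition: equivariant normalization.) For every R ∈ O(n) and every input
X ∈ ℝ^{n+2} with B·X ≠ 0: V · ((B·X)/‖B·X‖) = (B·(D₂(R)·X))/‖B·(D₂(R)·X)‖, where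
V = M_nᵀ · D(R_O · R · R_Oᵀ) · M_n and ‖·‖ is the Euclidean norm on ℝ^{n+1}. -/
theorem equivariant_normalization (n : ℕ) (hn : 1 ≤ n)
    (c₀ : EuclideanSpace ℝ (Fin n)) (s₁ s₂ : ℝ)
    (RO : Matrix (Fin n) (Fin n) ℝ) (hRO : ROᵀ * RO = 1)
    (T : Fin (n + 1) → Matrix (Fin n) (Fin n) ℝ) (hT : ∀ i, (T i)ᵀ * T i = 1)
    (hTc : ∀ i, (T i).mulVec (RO.mulVec c₀) = ‖c₀‖ • simplexVertex n i)
    (R : Matrix (Fin n) (Fin n) ℝ) (hR : Rᵀ * R = 1)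
    (X : Fin (n + 2) → ℝ) (hX : (filterBank n c₀ s₁ s₂ RO T).mulVec X ≠ 0) :
    ((simplexM n)ᵀ * blockDiag1 n (RO * R * ROᵀ) * simplexM n).mulVec
        (‖(EuclideanSpace.equiv (Fin (n + 1)) ℝ).symm
            ((filterBank n c₀ s₁ s₂ RO T).mulVec X)‖⁻¹ •
          (filterBank n c₀ s₁ s₂ RO T).mulVec X) =
      ‖(EuclideanSpace.equiv (Fin (n + 1)) ℝ).symm
          ((filterBank n c₀ s₁ s₂ RO T).mulVec ((blockDiag2 n R).mulVec X))‖⁻¹ •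
        (filterBank n c₀ s₁ s₂ RO T).mulVec ((blockDiag2 n R).mulVec X) := by
  have hMtM : (simplexM n)ᵀ * simplexM n = 1 := EqNormAux.simplexM_transpose_mul n hn
  have hMMt : simplexM n * (simplexM n)ᵀ = 1 := EqNormAux.simplexM_mul_transpose n hn
  have hROT : RO * ROᵀ = 1 := mul_eq_one_comm.mp hRO
  set B := filterBank n c₀ s₁ s₂ RO T with hBdef
  set G := EqNormAux.auxG n c₀ s₁ s₂ RO with hGdef
  set M := simplexM n with hMdef
  set Q := RO * R * ROᵀ with hQdef
  set V := Mᵀ * blockDiag1 n Q * M with hVdef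
  have hB : B = Mᵀ * G := EqNormAux.filterBank_eq n hn c₀ s₁ s₂ RO T hTc
  have hDG : blockDiag1 n Q * G = G * blockDiag2 n R :=
    EqNormAux.auxG_comm n c₀ s₁ s₂ RO R hRO
  have hM1 : ∀ Z : Matrix (Fin (n+1)) (Fin (n+2)) ℝ, M * (Mᵀ * Z) = Z := fun Z => by
    rw [← Matrix.mul_assoc, hMMt, Matrix.one_mul]
  have hVB : V * B = B * blockDiag2 n R := by
    rw [hB, hVdef]
    rw [Matrix.mul_assoc (Mᵀ * blockDiag1 n Q) M (Mᵀ * G), hM1,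
      Matrix.mul_assoc Mᵀ (blockDiag1 n Q) G, hDG, ← Matrix.mul_assoc]
  have hQ : Qᵀ * Q = 1 := by
    have h1 : ∀ Z : Matrix (Fin n) (Fin n) ℝ, ROᵀ * (RO * Z) = Z := fun Z => by
      rw [← Matrix.mul_assoc, hRO, Matrix.one_mul]
    have h2 : ∀ Z : Matrix (Fin n) (Fin n) ℝ, Rᵀ * (R * Z) = Z := fun Z => by
      rw [← Matrix.mul_assoc, hR, Matrix.one_mul]
    rw [hQdef]
    have hexp : (RO * R * ROᵀ)ᵀ * (RO * R * ROᵀ)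
        = RO * (Rᵀ * (ROᵀ * (RO * (R * ROᵀ)))) := by
      simp [Matrix.transpose_mul, Matrix.mul_assoc]
    rw [hexp, h1 (R * ROᵀ), h2 ROᵀ, hROT]
  have hVorth : Vᵀ * V = 1 := by
    have hVt : Vᵀ = Mᵀ * (blockDiag1 n Qᵀ * M) := by
      rw [hVdef, Matrix.transpose_mul, Matrix.transpose_mul, Matrix.transpose_transpose,
        EqNormAux.blockDiag1_transpose]
    rw [hVt, hVdef]
    have hM1' : ∀ Z : Matrix (Fin (n+1)) (Fin (n+1)) ℝ, M * (Mᵀ * Z) = Z := fun Z => by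
      rw [← Matrix.mul_assoc, hMMt, Matrix.one_mul]
    calc Mᵀ * (blockDiag1 n Qᵀ * M) * (Mᵀ * blockDiag1 n Q * M)
        = Mᵀ * (blockDiag1 n Qᵀ * (M * (Mᵀ * (blockDiag1 n Q * M)))) := by
          simp only [Matrix.mul_assoc]
      _ = Mᵀ * (blockDiag1 n Qᵀ * (blockDiag1 n Q * M)) := by rw [hM1']
      _ = Mᵀ * (blockDiag1 n Qᵀ * blockDiag1 n Q * M) := by rw [Matrix.mul_assoc]
      _ = Mᵀ * M := by rw [EqNormAux.blockDiag1_mul, hQ, EqNormAux.blockDiag1_one, Matrix.one_mul]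
      _ = 1 := hMtM
  have hkey : V.mulVec (B.mulVec X) = B.mulVec ((blockDiag2 n R).mulVec X) := by
    rw [Matrix.mulVec_mulVec, Matrix.mulVec_mulVec, hVB]
  have hnorm : ‖(EuclideanSpace.equiv (Fin (n+1)) ℝ).symm
        (B.mulVec ((blockDiag2 n R).mulVec X))‖
      = ‖(EuclideanSpace.equiv (Fin (n+1)) ℝ).symm (B.mulVec X)‖ := by
    rw [← hkey]
    exact EqNormAux.mulVec_norm_of_orth V hVorth _
  rw [Matrix.mulVec_smul, hkey, hnorm]
end
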